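/- arXiv:2303.11248 — 4 statements merged into one kernel-verified Lean document; each statement's English description precedes it below -/
import Mathlib

section
/- Let φ be a rational inner function on the polydisk 𝔻^d and let α ∈ 𝕋. Then the support of the Clark measure σ_α is contained in the unimodular level set C_α(φ). -/
open MeasureTheory Complex Filter Topology

noncomputable section

/-- The open unit polydisk `𝔻^d` in `ℂ^d`. -/
def polyDisk (d : ℕ) : Set (Fin d → ℂ) := {z | ∀ j, ‖z j‖ < 1}

/-- The distinguished boundary `𝕋^d` of the polydisk. -/
def polyTorus (d : ℕ) : Set (Fin d → ℂ) := {z | ∀ j, ‖z j‖ = 1}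

/-- The product Poisson kernel `P_z(ζ) = ∏_j (1-|z_j|²)/|ζ_j - z_j|²`. -/
def poissonD (d : ℕ) (z ζ : Fin d → ℂ) : ℝ :=
  ∏ j, (1 - ‖z j‖ ^ 2) / ‖ζ j - z j‖ ^ 2

/-- `φ` has radial limit `L` at `ζ`:  `φ(rζ) → L` as `r → 1⁻`. -/
def HasRadialLimit (d : ℕ) (φ : (Fin d → ℂ) → ℂ) (ζ : Fin d → ℂ) (L : ℂ) : Prop :=
  Tendsto (fun r : ℝ => φ (fun j => (r : ℂ) * ζ j)) (𝓝[<] (1 : ℝ)) (𝓝 L)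

/-- Normalized Lebesgue measure on the d-torus, as a measure on `ℂ^d`. -/
def torusLebesgue (d : ℕ) : Measure (Fin d → ℂ) :=
  (ENNReal.ofReal ((2 * Real.pi) ^ d))⁻¹ •
    Measure.map (fun θ : Fin d → ℝ => fun j => Complex.exp ((θ j : ℂ) * Complex.I))
      (MeasureTheory.volume.restrict (Set.pi Set.univ fun _ => Set.Ico 0 (2 * Real.pi)))

/-- `φ = q/p` is a rational inner function on `𝔻^d`: `p, q` have no common factor,
`p` is zero-free on the polydisk, `φ` maps `𝔻^d` to `𝔻`, and the radial limits of `φ`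
are unimodular a.e. on `𝕋^d`. -/
structure IsRIFd (d : ℕ) (p q : MvPolynomial (Fin d) ℂ) : Prop where
  coprime : ∀ r : MvPolynomial (Fin d) ℂ, r ∣ p → r ∣ q → IsUnit r
  stable : ∀ z ∈ polyDisk d, MvPolynomial.eval z p ≠ 0
  mapsToDisk : ∀ z ∈ polyDisk d,
    ‖MvPolynomial.eval z q / MvPolynomial.eval z p‖ < 1
  inner : ∀ᵐ ζ ∂(torusLebesgue d),
    ∃ L : ℂ, ‖L‖ = 1 ∧
      HasRadialLimit d (fun z => MvPolynomial.eval z q / MvPolynomial.eval z p) ζ L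

/-- `σ` is the Clark measure of `φ` at parameter `α`: a positive Borel measure on `𝕋^d`
whose Poisson integral is `(1-|φ(z)|²)/|α-φ(z)|²`. -/
def IsClarkMeasureD (d : ℕ) (φ : (Fin d → ℂ) → ℂ) (α : ℂ) (σ : Measure (Fin d → ℂ)) : Prop :=
  σ (polyTorus d)ᶜ = 0 ∧
  ∀ z ∈ polyDisk d,
    ∫⁻ ζ, ENNReal.ofReal (poissonD d z ζ) ∂σ =
      ENNReal.ofReal ((1 - ‖φ z‖ ^ 2) / ‖α - φ z‖ ^ 2)

/-- The unimodular level set `C_α(φ)`. -/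
def levelSetD (d : ℕ) (φ : (Fin d → ℂ) → ℂ) (α : ℂ) : Set (Fin d → ℂ) :=
  closure {ζ | ζ ∈ polyTorus d ∧ HasRadialLimit d φ ζ α}

/-- The topological support of a measure: points all of whose open neighborhoods
have positive measure. -/
def measureSupport {X : Type*} [TopologicalSpace X] [MeasurableSpace X]
    (μ : Measure X) : Set X :=
  {x | ∀ U : Set X, IsOpen U → x ∈ U → 0 < μ U}

lemma slice_eval (d : ℕ) (ζ : Fin d → ℂ) (p : MvPolynomial (Fin d) ℂ) (lam : ℂ) :
    Polynomial.eval lam (MvPolynomial.aeval (fun j => Polynomial.C (ζ j) * Polynomial.X) p)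
      = MvPolynomial.eval (fun j => lam * ζ j) p := by
  have h := MvPolynomial.comp_aeval_apply (Polynomial.aeval lam)
      (f := fun j => Polynomial.C (ζ j) * Polynomial.X) (p := p)
  rw [← Polynomial.coe_aeval_eq_eval, h]
  have : (fun i => (Polynomial.aeval lam) (Polynomial.C (ζ i) * Polynomial.X)) = fun i => lam * ζ i := by
    funext i
    rw [map_mul, Polynomial.aeval_C, Polynomial.aeval_X, mul_comm]
    rfl
  rw [this, ← MvPolynomial.coe_aeval_eq_eval]
  rfl

lemma exists_radial_limit (d : ℕ) (p q : MvPolynomial (Fin d) ℂ)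
    (hstable : ∀ z ∈ polyDisk d, MvPolynomial.eval z p ≠ 0)
    (hmaps : ∀ z ∈ polyDisk d, ‖MvPolynomial.eval z q / MvPolynomial.eval z p‖ < 1)
    (ζ : Fin d → ℂ) (hζ : ζ ∈ polyTorus d) :
    ∃ L : ℂ, HasRadialLimit d (fun z => MvPolynomial.eval z q / MvPolynomial.eval z p) ζ L := by
  classical
  set P : Polynomial ℂ := MvPolynomial.aeval (fun j => Polynomial.C (ζ j) * Polynomial.X) p with hP
  set Q : Polynomial ℂ := MvPolynomial.aeval (fun j => Polynomial.C (ζ j) * Polynomial.X) q with hQ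
  have hmem : ∀ r : ℝ, 0 ≤ r → r < 1 → (fun j => (r : ℂ) * ζ j) ∈ polyDisk d := by
    intro r hr0 hr1 j
    rw [norm_mul, hζ j, mul_one, Complex.norm_real, Real.norm_eq_abs, _root_.abs_of_nonneg hr0]
    exact hr1
  have hfun : ∀ r : ℝ,
      MvPolynomial.eval (fun j => (r:ℂ) * ζ j) q / MvPolynomial.eval (fun j => (r:ℂ) * ζ j) p
        = Q.eval (r:ℂ) / P.eval (r:ℂ) := by
    intro r; rw [hP, hQ, slice_eval, slice_eval]
  -- P is nonzero
  have hP0 : P.eval 0 ≠ 0 := by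
    rw [hP, slice_eval]
    have h0 : (fun j => (0:ℂ) * ζ j) ∈ polyDisk d := by intro j; simp
    exact hstable _ h0
  have hPne : P ≠ 0 := fun h => hP0 (by simp [h])
  have l_le : (𝓝[<] (1:ℝ)) ≤ 𝓝 (1:ℝ) := nhdsWithin_le_nhds
  have htends : Tendsto (fun r : ℝ => (r:ℂ)) (𝓝[<] (1:ℝ)) (𝓝 (1:ℂ)) := by
    have : Tendsto (fun r : ℝ => (r:ℂ)) (𝓝 (1:ℝ)) (𝓝 (1:ℂ)) :=
      (Complex.continuous_ofReal.tendsto 1)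
    exact this.mono_left l_le
  have Epos : ∀ᶠ r in 𝓝[<] (1:ℝ), 0 < r :=
    ((eventually_gt_nhds (by norm_num : (0:ℝ) < 1)).filter_mono l_le)
  have Elt : ∀ᶠ r in 𝓝[<] (1:ℝ), r < 1 := eventually_mem_nhdsWithin.mono (fun r hr => hr)
  by_cases hQ0 : Q = 0
  · refine ⟨0, ?_⟩
    unfold HasRadialLimit
    have : ∀ r : ℝ, (fun z => MvPolynomial.eval z q / MvPolynomial.eval z p) (fun j => (r:ℂ) * ζ j) = 0 := by
      intro r
      simp only
      rw [hfun r, hQ0]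
      simp
    simpa [this] using tendsto_const_nhds
  -- factor out root multiplicities at 1
  set mP := P.rootMultiplicity 1 with hmP
  set mQ := Q.rootMultiplicity 1 with hmQ
  set P₁ := P /ₘ (Polynomial.X - Polynomial.C 1) ^ mP with hP₁def
  set Q₁ := Q /ₘ (Polynomial.X - Polynomial.C 1) ^ mQ with hQ₁def
  have hPfac : (Polynomial.X - Polynomial.C 1) ^ mP * P₁ = P :=
    Polynomial.pow_mul_divByMonic_rootMultiplicity_eq P 1
  have hQfac : (Polynomial.X - Polynomial.C 1) ^ mQ * Q₁ = Q :=
    Polynomial.pow_mul_divByMonic_rootMultiplicity_eq Q 1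
  have hP₁ : P₁.eval 1 ≠ 0 := Polynomial.eval_divByMonic_pow_rootMultiplicity_ne_zero 1 hPne
  have hQ₁ : Q₁.eval 1 ≠ 0 := Polynomial.eval_divByMonic_pow_rootMultiplicity_ne_zero 1 hQ0
  have hPev : ∀ lam : ℂ, P.eval lam = (lam - 1) ^ mP * P₁.eval lam := by
    intro lam; conv_lhs => rw [← hPfac]
    simp [Polynomial.eval_mul, Polynomial.eval_pow]
  have hQev : ∀ lam : ℂ, Q.eval lam = (lam - 1) ^ mQ * Q₁.eval lam := by
    intro lam; conv_lhs => rw [← hQfac]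
    simp [Polynomial.eval_mul, Polynomial.eval_pow]
  -- continuity facts
  have hcontP : Tendsto (fun r : ℝ => P₁.eval (r:ℂ)) (𝓝[<] (1:ℝ)) (𝓝 (P₁.eval 1)) :=
    ((P₁.continuous_aeval.tendsto 1).comp htends : _)

  have hcontP : Tendsto (fun r : ℝ => P₁.eval (r:ℂ)) (𝓝[<] (1:ℝ)) (𝓝 (P₁.eval 1)) :=
    (P₁.continuous.tendsto 1).comp htends
  have hcontQ : Tendsto (fun r : ℝ => Q₁.eval (r:ℂ)) (𝓝[<] (1:ℝ)) (𝓝 (Q₁.eval 1)) :=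
    (Q₁.continuous.tendsto 1).comp htends
  have EP₁ : ∀ᶠ r : ℝ in 𝓝[<] (1:ℝ), P₁.eval (r:ℂ) ≠ 0 := hcontP.eventually_ne hP₁
  rcases le_or_gt mP mQ with hle | hlt
  · refine ⟨(0:ℂ)^(mQ - mP) * (Q₁.eval 1 / P₁.eval 1), ?_⟩
    unfold HasRadialLimit
    have h1 : Tendsto (fun r : ℝ => ((r:ℂ) - 1)) (𝓝[<] (1:ℝ)) (𝓝 0) := by
      have := htends.sub (tendsto_const_nhds (x := (1:ℂ)))
      simpa using this
    have htarget : Tendsto (fun r : ℝ => ((r:ℂ) - 1)^(mQ - mP) * (Q₁.eval (r:ℂ) / P₁.eval (r:ℂ)))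
        (𝓝[<] (1:ℝ)) (𝓝 ((0:ℂ)^(mQ-mP) * (Q₁.eval 1 / P₁.eval 1))) :=
      (h1.pow _).mul (hcontQ.div hcontP hP₁)
    apply htarget.congr'
    filter_upwards [Elt, EP₁] with r hr hne
    have hr1 : ((r:ℂ) - 1) ≠ 0 := by
      rw [sub_ne_zero]
      exact_mod_cast ne_of_lt hr
    rw [hfun r, hQev, hPev]
    rw [show mQ = mP + (mQ - mP) by omega, pow_add]
    have hppow : ((r:ℂ) - 1)^mP ≠ 0 := pow_ne_zero _ hr1
    field_simp
    ring_nf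
    simp only [Nat.add_sub_cancel_left]
  · exfalso
    set m := mP - mQ with hm
    set c := ‖Q₁.eval 1‖ with hc
    have hc0 : 0 < c := norm_pos_iff.mpr hQ₁
    set C := ‖P₁.eval 1‖ + 1 with hC
    have hC0 : 0 < C := by positivity
    have hhalf : c/2 < ‖Polynomial.eval 1 Q₁‖ := by rw [← hc]; linarith
    have EnQ : ∀ᶠ r : ℝ in 𝓝[<] (1:ℝ), c/2 < ‖Q₁.eval (r:ℂ)‖ :=
      hcontQ.norm.eventually (eventually_gt_nhds hhalf)
    have hPC : ‖Polynomial.eval 1 P₁‖ < C := by rw [hC]; linarith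
    have EnP : ∀ᶠ r : ℝ in 𝓝[<] (1:ℝ), ‖P₁.eval (r:ℂ)‖ < C :=
      hcontP.norm.eventually (eventually_lt_nhds hPC)
    have Esmall : ∀ᶠ r : ℝ in 𝓝[<] (1:ℝ), ‖((r:ℂ)-1)‖^m < (c/2)/C := by
      have h1 : Tendsto (fun r : ℝ => ((r:ℂ) - 1)) (𝓝[<] (1:ℝ)) (𝓝 0) := by
        have := htends.sub (tendsto_const_nhds (x := (1:ℂ)))
        simpa using this
      have h2 : Tendsto (fun r : ℝ => ‖((r:ℂ) - 1)‖^m) (𝓝[<] (1:ℝ)) (𝓝 (‖(0:ℂ)‖^m)) :=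
        h1.norm.pow m
      rw [norm_zero, zero_pow (by omega)] at h2
      have hpos : (0:ℝ) < (c/2)/C := by positivity
      exact h2.eventually (eventually_lt_nhds hpos)
    have hfalse : ∀ᶠ r in 𝓝[<] (1:ℝ), False := by
      filter_upwards [Epos, Elt, EnQ, EnP, Esmall] with r h0 h1 h2 h3 h4
      have hmemr := hmem r (le_of_lt h0) h1
      have hb := hmaps _ hmemr
      rw [hfun r] at hb
      have hPne' : P.eval (r:ℂ) ≠ 0 := by
        rw [hP, slice_eval]
        exact hstable _ hmemr
      rw [norm_div] at hb
      have hlt : ‖Q.eval (r:ℂ)‖ < ‖P.eval (r:ℂ)‖ :=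
        (div_lt_one (norm_pos_iff.mpr hPne')).mp hb
      rw [hQev, hPev, norm_mul, norm_mul, norm_pow, norm_pow] at hlt
      rw [show mP = mQ + m by omega, pow_add, mul_assoc] at hlt
      have hpow : (0:ℝ) < ‖(r:ℂ) - 1‖ ^ mQ := by
        apply pow_pos
        rw [norm_pos_iff, sub_ne_zero]
        exact_mod_cast ne_of_lt h1
      have h5 := lt_of_mul_lt_mul_left hlt (le_of_lt hpow)
      have h6 : ‖(r:ℂ)-1‖^m * ‖P₁.eval (r:ℂ)‖ < ((c/2)/C) * C := by
        apply mul_lt_mul'' h4 h3 (by positivity) (norm_nonneg _)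
      rw [div_mul_cancel₀ _ (ne_of_gt hC0)] at h6
      linarith
    exact hfalse.exists.elim (fun _ f => f)

lemma isClosed_polyTorus (d : ℕ) : IsClosed (polyTorus d) := by
  have : polyTorus d = ⋂ j, {z : Fin d → ℂ | ‖z j‖ = 1} := by
    ext z; simp [polyTorus, Set.mem_iInter]
  rw [this]
  exact isClosed_iInter fun j =>
    isClosed_eq (Continuous.norm (continuous_apply j)) continuous_const

lemma clark_ball_bound (d : ℕ) (φ : (Fin d → ℂ) → ℂ)
    (α : ℂ) (σ : Measure (Fin d → ℂ))
    (hσ : IsClarkMeasureD d φ α σ)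
    (ζ : Fin d → ℂ) (hζ : ζ ∈ polyTorus d) (t : ℝ) (ht0 : 0 < t) (ht1 : t ≤ 1) :
    σ (Metric.closedBall ζ t) ≤
      ENNReal.ofReal ((4*t)^d *
        ((1 - ‖φ (fun j => ((1 - t : ℝ) : ℂ) * ζ j)‖ ^ 2) /
          ‖α - φ (fun j => ((1 - t : ℝ) : ℂ) * ζ j)‖ ^ 2)) := by
  set z : Fin d → ℂ := fun j => ((1 - t : ℝ) : ℂ) * ζ j with hz
  have hnormz : ∀ j, ‖z j‖ = 1 - t := by
    intro j
    rw [hz]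
    simp only
    rw [norm_mul, hζ j, mul_one, Complex.norm_real, Real.norm_eq_abs,
      _root_.abs_of_nonneg (by linarith : (0:ℝ) ≤ 1 - t)]
  have hzD : z ∈ polyDisk d := by
    intro j
    rw [hnormz j]
    linarith
  have key := hσ.2 z hzD
  set s : Set (Fin d → ℂ) := Metric.closedBall ζ t ∩ polyTorus d with hs
  have hmeas : MeasurableSet s :=
    (Metric.isClosed_closedBall.measurableSet).inter (isClosed_polyTorus d).measurableSet
  have hker : ∀ ζ' ∈ s, ((4*t)^d)⁻¹ ≤ poissonD d z ζ' := by
    rintro ζ' ⟨hball, htorus⟩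
    unfold poissonD
    rw [show (((4*t)^d)⁻¹ : ℝ) = ∏ _j : Fin d, (4*t)⁻¹ by
      rw [Finset.prod_const, Finset.card_univ, Fintype.card_fin, inv_pow]]
    apply Finset.prod_le_prod
    · intro j _
      positivity
    · intro j _
      have hnum : 1 - ‖z j‖^2 = t * (2 - t) := by rw [hnormz j]; ring
      have hlow : t ≤ ‖ζ' j - z j‖ := by
        have h1 := norm_sub_norm_le (ζ' j) (z j)
        rw [htorus j, hnormz j] at h1
        linarith
      have hden : ‖ζ' j - z j‖ ≤ 2 * t := by
        have h1 : ‖ζ' j - ζ j‖ ≤ t := by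
          have h3 := dist_le_pi_dist ζ' ζ j
          have h2 : dist ζ' ζ ≤ t := Metric.mem_closedBall.mp hball
          rw [dist_eq_norm] at h3
          linarith
        have h2 : ‖ζ j - z j‖ = t := by
          rw [hz]
          simp only
          have he : ζ j - ((1 - t : ℝ) : ℂ) * ζ j = ((t:ℝ):ℂ) * ζ j := by
            push_cast
            ring
          rw [he, norm_mul, hζ j, mul_one, Complex.norm_real, Real.norm_eq_abs,
            _root_.abs_of_nonneg (le_of_lt ht0)]
        calc ‖ζ' j - z j‖ ≤ ‖ζ' j - ζ j‖ + ‖ζ j - z j‖ :=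
              norm_sub_le_norm_sub_add_norm_sub (ζ' j) (ζ j) (z j)
          _ ≤ t + t := by rw [h2]; linarith
          _ = 2 * t := by ring
      have hden2 : ‖ζ' j - z j‖^2 ≤ 4 * t^2 := by nlinarith
      have hdenpos : 0 < ‖ζ' j - z j‖^2 := pow_pos (lt_of_lt_of_le ht0 hlow) 2
      rw [le_div_iff₀ hdenpos, hnum]
      have e1 : (4*t)⁻¹ * (4*t^2) = t := by
        field_simp
      nlinarith [mul_le_mul_of_nonneg_left hden2 (by positivity : (0:ℝ) ≤ (4*t)⁻¹)]
  have hstep : ENNReal.ofReal (((4*t)^d)⁻¹) * σ s ≤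
      ENNReal.ofReal ((1 - ‖φ z‖ ^ 2) / ‖α - φ z‖ ^ 2) := by
    calc ENNReal.ofReal (((4*t)^d)⁻¹) * σ s
        = ∫⁻ _ in s, ENNReal.ofReal (((4*t)^d)⁻¹) ∂σ := (setLIntegral_const s _).symm
      _ ≤ ∫⁻ ζ' in s, ENNReal.ofReal (poissonD d z ζ') ∂σ := by
          apply setLIntegral_mono' hmeas
          intro x hx
          exact ENNReal.ofReal_le_ofReal (hker x hx)
      _ ≤ ∫⁻ ζ', ENNReal.ofReal (poissonD d z ζ') ∂σ := setLIntegral_le_lintegral s _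
      _ = _ := key
  have hσs : σ (Metric.closedBall ζ t) ≤ σ s := by
    have hsplit : Metric.closedBall ζ t ⊆ s ∪ (polyTorus d)ᶜ := by
      intro x hx
      by_cases hxt : x ∈ polyTorus d
      · exact Or.inl ⟨hx, hxt⟩
      · exact Or.inr hxt
    calc σ (Metric.closedBall ζ t) ≤ σ (s ∪ (polyTorus d)ᶜ) := measure_mono hsplit
      _ ≤ σ s + σ (polyTorus d)ᶜ := measure_union_le _ _
      _ = σ s := by rw [hσ.1, add_zero]
  have hpow : (0:ℝ) < (4*t)^d := by positivity
  have hone : ENNReal.ofReal ((4*t)^d) * ENNReal.ofReal (((4*t)^d)⁻¹) = 1 := by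
    rw [← ENNReal.ofReal_mul (le_of_lt hpow), mul_inv_cancel₀ (ne_of_gt hpow)]
    simp
  calc σ (Metric.closedBall ζ t) ≤ σ s := hσs
    _ = 1 * σ s := (one_mul _).symm
    _ = ENNReal.ofReal ((4*t)^d) * (ENNReal.ofReal (((4*t)^d)⁻¹) * σ s) := by
        rw [← mul_assoc, hone]
    _ ≤ ENNReal.ofReal ((4*t)^d) * ENNReal.ofReal ((1 - ‖φ z‖ ^ 2) / ‖α - φ z‖ ^ 2) := by
        exact mul_le_mul_right hstep _
    _ = ENNReal.ofReal ((4*t)^d * ((1 - ‖φ z‖ ^ 2) / ‖α - φ z‖ ^ 2)) := by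
        rw [← ENNReal.ofReal_mul (le_of_lt hpow)]

lemma measurable_torusMap (d : ℕ) :
    Measurable (fun θ : Fin d → ℝ => fun j => Complex.exp ((θ j : ℂ) * Complex.I)) := by
  apply measurable_pi_iff.mpr
  intro j
  apply Measurable.comp Complex.measurable_exp
  exact ((Complex.measurable_ofReal.comp (measurable_pi_apply j)).mul measurable_const)

instance torusLebesgue_finite (d : ℕ) : IsFiniteMeasure (torusLebesgue d) := by
  constructor
  unfold torusLebesgue
  rw [Measure.smul_apply, Measure.map_apply (measurable_torusMap d) MeasurableSet.univ]
  rw [Set.preimage_univ, Measure.restrict_apply MeasurableSet.univ, Set.univ_inter]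
  rw [volume_pi_pi]
  simp only [Real.volume_Ico, sub_zero]
  rw [Finset.prod_const, Finset.card_univ, Fintype.card_fin]
  have hπ : (0:ℝ) < 2 * Real.pi := by positivity
  rw [← ENNReal.ofReal_pow (le_of_lt hπ)]
  rw [smul_eq_mul]
  refine ENNReal.mul_lt_top ?_ ENNReal.ofReal_lt_top
  exact ENNReal.inv_lt_top.mpr (by simp [hπ])

lemma torusLebesgue_ball_lower (d : ℕ) (ζ : Fin d → ℂ) (hζ : ζ ∈ polyTorus d)
    (t : ℝ) (ht0 : 0 < t) (ht1 : t ≤ 1) :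
    ENNReal.ofReal ((t/(16*Real.pi))^d) ≤ torusLebesgue d (Metric.closedBall ζ t) := by
  have hπ3 : (3:ℝ) < Real.pi := Real.pi_gt_three
  -- angles
  set θ0 : Fin d → ℝ := fun j => if 0 ≤ Complex.arg (ζ j) then Complex.arg (ζ j)
    else Complex.arg (ζ j) + 2 * Real.pi with hθ0
  have hθ0mem : ∀ j, 0 ≤ θ0 j ∧ θ0 j < 2 * Real.pi := by
    intro j
    have h1 := Complex.neg_pi_lt_arg (ζ j)
    have h2 := Complex.arg_le_pi (ζ j)
    simp only [hθ0]
    by_cases h : 0 ≤ Complex.arg (ζ j)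
    · rw [if_pos h]
      exact ⟨h, by linarith⟩
    · rw [if_neg h]
      push_neg at h
      exact ⟨by linarith, by linarith⟩
  have hθ0exp : ∀ j, Complex.exp ((θ0 j : ℂ) * Complex.I) = ζ j := by
    intro j
    have habs : ‖ζ j‖ = 1 := by
      have := hζ j
      exact this
    have harg := Complex.norm_mul_exp_arg_mul_I (ζ j)
    rw [habs] at harg
    simp only [Complex.ofReal_one, one_mul] at harg
    simp only [hθ0]
    by_cases h : 0 ≤ Complex.arg (ζ j)
    · rw [if_pos h]
      exact harg
    · rw [if_neg h]
      push_cast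
      rw [add_mul, Complex.exp_add, harg, Complex.exp_two_pi_mul_I, mul_one]
  -- intervals
  set a : Fin d → ℝ := fun j => if θ0 j + t/8 ≤ 2 * Real.pi then θ0 j else θ0 j - t/8 with ha
  have haprop : ∀ j, 0 ≤ a j ∧ a j + t/8 ≤ 2*Real.pi ∧ |a j - θ0 j| ≤ t/8 ∧ (a j + t/8) - θ0 j ≤ t/8 ∧ θ0 j - a j ≤ t/8 := by
    intro j
    obtain ⟨h0, h2π⟩ := hθ0mem j
    simp only [ha]
    by_cases h : θ0 j + t/8 ≤ 2 * Real.pi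
    · rw [if_pos h]
      refine ⟨h0, h, by simp; positivity, by linarith, by linarith⟩
    · rw [if_neg h]
      push_neg at h
      have h8 : t/8 ≤ 1/8 := by linarith
      refine ⟨by linarith, by linarith, ?_, by linarith, by linarith⟩
      rw [abs_le]
      constructor <;> linarith
  -- the box
  set I : Fin d → Set ℝ := fun j => Set.Ico (a j) (a j + t/8) with hI
  have hsub : (Set.pi Set.univ I) ⊆
      (Set.pi Set.univ fun _ => Set.Ico 0 (2 * Real.pi)) ∩
        ((fun θ : Fin d → ℝ => fun j => Complex.exp ((θ j : ℂ) * Complex.I)) ⁻¹'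
          (Metric.closedBall ζ t)) := by
    intro θ hθ
    constructor
    · intro j hj
      obtain ⟨h0, h2π, _, _, _⟩ := haprop j
      have := hθ j (Set.mem_univ j)
      rw [hI] at this
      obtain ⟨hl, hr⟩ := this
      constructor
      · linarith
      · linarith
    · simp only [Set.mem_preimage, Metric.mem_closedBall]
      rw [dist_pi_le_iff (le_of_lt ht0)]
      intro j
      obtain ⟨h0, h2π, habs', hup, hdown⟩ := haprop j
      have hmem := hθ j (Set.mem_univ j)
      rw [hI] at hmem
      obtain ⟨hl, hr⟩ := hmem
      have hclose : |θ j - θ0 j| ≤ t/8 := by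
        rw [abs_le]
        constructor <;> [linarith; linarith]
      rw [dist_eq_norm, ← hθ0exp j]
      have hfac : Complex.exp ((θ j : ℂ) * Complex.I) - Complex.exp ((θ0 j : ℂ) * Complex.I)
          = Complex.exp ((θ0 j : ℂ) * Complex.I) *
            (Complex.exp (((θ j - θ0 j : ℝ) : ℂ) * Complex.I) - 1) := by
        rw [mul_sub, mul_one, ← Complex.exp_add]
        push_cast
        ring_nf
      rw [hfac, norm_mul]
      have h1 : ‖Complex.exp ((θ0 j : ℂ) * Complex.I)‖ = 1 := by
        rw [Complex.norm_exp_ofReal_mul_I]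
      rw [h1, one_mul]
      have habsx : ‖((θ j - θ0 j : ℝ) : ℂ) * Complex.I‖ ≤ 1 := by
        rw [norm_mul, Complex.norm_I, mul_one, Complex.norm_real, Real.norm_eq_abs]
        linarith [hclose]
      have := Complex.norm_exp_sub_one_le habsx
      rw [norm_mul, Complex.norm_I, mul_one, Complex.norm_real, Real.norm_eq_abs] at this
      calc ‖Complex.exp (((θ j - θ0 j : ℝ) : ℂ) * Complex.I) - 1‖
          ≤ 2 * |θ j - θ0 j| := this
        _ ≤ 2 * (t/8) := by linarith [hclose]
        _ ≤ t := by linarith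
  -- compute measures
  have hCB : MeasurableSet (Metric.closedBall ζ t) := Metric.isClosed_closedBall.measurableSet
  unfold torusLebesgue
  rw [Measure.smul_apply, Measure.map_apply (measurable_torusMap d) hCB]
  rw [Measure.restrict_apply ((measurable_torusMap d) hCB)]
  have hvol : ENNReal.ofReal ((t/8)^d) ≤
      volume (((fun θ : Fin d → ℝ => fun j => Complex.exp ((θ j : ℂ) * Complex.I)) ⁻¹'
          (Metric.closedBall ζ t)) ∩ (Set.pi Set.univ fun _ => Set.Ico 0 (2 * Real.pi))) := by
    have h1 : (Set.pi Set.univ I) ⊆ _ := hsub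
    have h2 : volume (Set.pi Set.univ I) = ENNReal.ofReal ((t/8)^d) := by
      rw [volume_pi_pi]
      simp only [hI, Real.volume_Ico, add_sub_cancel_left]
      rw [Finset.prod_const, Finset.card_univ, Fintype.card_fin,
        ← ENNReal.ofReal_pow (by linarith : (0:ℝ) ≤ t/8)]
    rw [← h2]
    apply measure_mono
    intro x hx
    have := hsub hx
    exact ⟨this.2, this.1⟩
  have hπpos : (0:ℝ) < (2 * Real.pi)^d := by positivity
  set A := ENNReal.ofReal ((2 * Real.pi) ^ d) with hA
  have hAne0 : A ≠ 0 := by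
    rw [hA]
    simp only [ne_eq, ENNReal.ofReal_eq_zero, not_le]
    exact hπpos
  have hAnetop : A ≠ ⊤ := ENNReal.ofReal_ne_top
  have heq : A * ENNReal.ofReal ((t/(16*Real.pi))^d) = ENNReal.ofReal ((t/8)^d) := by
    rw [hA, ← ENNReal.ofReal_mul (le_of_lt hπpos)]
    congr 1
    rw [← mul_pow]
    congr 1
    have : Real.pi ≠ 0 := by positivity
    field_simp
    ring
  calc ENNReal.ofReal ((t/(16*Real.pi))^d)
      = A⁻¹ * (A * ENNReal.ofReal ((t/(16*Real.pi))^d)) := by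
        rw [← mul_assoc, ENNReal.inv_mul_cancel hAne0 hAnetop, one_mul]
    _ = A⁻¹ * ENNReal.ofReal ((t/8)^d) := by rw [heq]
    _ ≤ A⁻¹ * volume _ := by
        exact mul_le_mul_right hvol _
    _ = _ := rfl

lemma vitali_null (X : Type*) [MetricSpace X] [MeasurableSpace X] [BorelSpace X]
    [SecondCountableTopology X]
    (σ m : Measure X) [IsFiniteMeasure m] (dd : ℕ)
    (c ε : ℝ) (hc : 0 < c) (hε : 0 ≤ ε)
    (A U : Set X) (hU : IsOpen U) (hAU : A ⊆ U)
    (hm : ∀ ζ ∈ A, ∀ t : ℝ, 0 < t → t ≤ 1 → ENNReal.ofReal (c * t^dd) ≤ m (Metric.closedBall ζ t))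
    (hσb : ∀ ζ ∈ A, ∃ R : ℝ, 0 < R ∧ R ≤ 1 ∧ ∀ t : ℝ, 0 < t → t ≤ R →
        σ (Metric.closedBall ζ t) ≤ ENNReal.ofReal (ε * t^dd)) :
    σ A ≤ ENNReal.ofReal (4^dd * ε / c) * m U := by
  classical
  have hσ' : ∀ a : ↥A, ∃ R : ℝ, 0 < R ∧ R ≤ 1 ∧ ∀ t : ℝ, 0 < t → t ≤ R →
      σ (Metric.closedBall (a : X) t) ≤ ENNReal.ofReal (ε * t^dd) := fun a => hσb a a.2
  choose R hR0 hR1 hRb using hσ'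
  have hρ' : ∀ a : ↥A, ∃ ρ : ℝ, 0 < ρ ∧ Metric.ball (a : X) ρ ⊆ U := by
    intro a
    exact Metric.isOpen_iff.mp hU a (hAU a.2)
  choose ρ hρ0 hρU using hρ'
  set r : ↥A → ℝ := fun a => min (R a / 4) (ρ a / 2) with hr
  have hr0 : ∀ a, 0 < r a := fun a => lt_min (by linarith [hR0 a]) (by linarith [hρ0 a])
  have hr1 : ∀ a ∈ (Set.univ : Set ↥A), r a ≤ 1 := by
    intro a _
    calc r a ≤ R a / 4 := min_le_left _ _
      _ ≤ 1 := by linarith [hR1 a]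
  obtain ⟨u, -, hdisj, hcover⟩ :=
    Vitali.exists_disjoint_subfamily_covering_enlargement_closedBall
      (Set.univ : Set ↥A) (fun a => (a : X)) r 1 hr1 4 (by norm_num)
  -- countability of u
  have hcnt : u.Countable := by
    have hpos : ∀ b : ↥u, 0 < m (Metric.closedBall ((b : ↥A) : X) (r b)) := by
      intro b
      have := hm (b : ↥A) (b : ↥A).2 (r b) (hr0 b) (hr1 b (Set.mem_univ _))
      have hlt : (0:ENNReal) < ENNReal.ofReal (c * (r b)^dd) := by
        rw [ENNReal.ofReal_pos]
        have := hr0 b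
        positivity
      exact lt_of_lt_of_le hlt this
    have hdisj' : Pairwise (Function.onFun Disjoint fun b : ↥u => Metric.closedBall ((b : ↥A) : X) (r b)) := by
      intro b1 b2 hne
      exact hdisj b1.2 b2.2 (fun h => hne (Subtype.ext h))
    have hmeas' : ∀ b : ↥u, MeasurableSet (Metric.closedBall ((b : ↥A) : X) (r b)) :=
      fun b => Metric.isClosed_closedBall.measurableSet
    have := MeasureTheory.Measure.countable_meas_pos_of_disjoint_iUnion
      (μ := m) hmeas' hdisj'
    have huniv : {i : ↥u | 0 < m (Metric.closedBall ((i : ↥A) : X) (r i))} = Set.univ := by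
      ext b; simp [hpos b]
    rw [huniv] at this
    have : Countable ↥u := by
      rw [Set.countable_univ_iff] at this
      exact this
    exact Set.countable_coe_iff.mp this
  have : Countable ↥u := hcnt.to_subtype
  -- covering
  have hcov : A ⊆ ⋃ b : ↥u, Metric.closedBall ((b : ↥A) : X) (4 * r b) := by
    intro x hx
    obtain ⟨b, hbu, hsub⟩ := hcover ⟨x, hx⟩ (Set.mem_univ _)
    have hxmem : x ∈ Metric.closedBall ((⟨x, hx⟩ : ↥A) : X) (r ⟨x, hx⟩) :=
      Metric.mem_closedBall_self (le_of_lt (hr0 _))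
    exact Set.mem_iUnion.mpr ⟨⟨b, hbu⟩, hsub hxmem⟩
  have hsum : σ A ≤ ∑' b : ↥u, σ (Metric.closedBall ((b : ↥A) : X) (4 * r b)) :=
    le_trans (measure_mono hcov) (measure_iUnion_le _)
  have hterm : ∀ b : ↥u, σ (Metric.closedBall ((b : ↥A) : X) (4 * r b)) ≤
      ENNReal.ofReal (4^dd * ε / c) * m (Metric.closedBall ((b : ↥A) : X) (r b)) := by
    intro b
    have h4r : 4 * r b ≤ R (b : ↥A) := by
      have := min_le_left (R (b : ↥A) / 4) (ρ (b : ↥A) / 2)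
      rw [hr]
      simp only
      linarith
    have h1 := hRb (b : ↥A) (4 * r b) (by linarith [hr0 (b : ↥A)]) h4r
    have h2 : ENNReal.ofReal (ε * (4 * r b)^dd) =
        ENNReal.ofReal (4^dd * ε / c) * ENNReal.ofReal (c * (r b)^dd) := by
      rw [← ENNReal.ofReal_mul (by positivity)]
      congr 1
      rw [mul_pow]
      field_simp
    have h3 := hm (b : ↥A) (b : ↥A).2 (r b) (hr0 b) (hr1 b (Set.mem_univ _))
    calc σ (Metric.closedBall ((b : ↥A) : X) (4 * r b)) ≤ ENNReal.ofReal (ε * (4 * r b)^dd) := h1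
      _ = ENNReal.ofReal (4^dd * ε / c) * ENNReal.ofReal (c * (r b)^dd) := h2
      _ ≤ ENNReal.ofReal (4^dd * ε / c) * m (Metric.closedBall ((b : ↥A) : X) (r b)) :=
          mul_le_mul_right h3 _
  have hdisj' : Pairwise (Function.onFun Disjoint fun b : ↥u => Metric.closedBall ((b : ↥A) : X) (r b)) := by
    intro b1 b2 hne
    exact hdisj b1.2 b2.2 (fun h => hne (Subtype.ext h))
  have hUnion : (⋃ b : ↥u, Metric.closedBall ((b : ↥A) : X) (r b)) ⊆ U := by
    apply Set.iUnion_subset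
    intro b
    have h1 : Metric.closedBall ((b : ↥A) : X) (r b) ⊆ Metric.ball ((b : ↥A) : X) (ρ (b : ↥A)) := by
      apply Metric.closedBall_subset_ball
      calc r b ≤ ρ (b : ↥A) / 2 := min_le_right _ _
        _ < ρ (b : ↥A) := by linarith [hρ0 (b : ↥A)]
    exact h1.trans (hρU _)
  calc σ A ≤ ∑' b : ↥u, σ (Metric.closedBall ((b : ↥A) : X) (4 * r b)) := hsum
    _ ≤ ∑' b : ↥u, ENNReal.ofReal (4^dd * ε / c) * m (Metric.closedBall ((b : ↥A) : X) (r b)) :=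
        ENNReal.tsum_le_tsum hterm
    _ = ENNReal.ofReal (4^dd * ε / c) * ∑' b : ↥u, m (Metric.closedBall ((b : ↥A) : X) (r b)) :=
        ENNReal.tsum_mul_left
    _ = ENNReal.ofReal (4^dd * ε / c) * m (⋃ b : ↥u, Metric.closedBall ((b : ↥A) : X) (r b)) := by
        rw [measure_iUnion hdisj' (fun b => Metric.isClosed_closedBall.measurableSet)]
    _ ≤ ENNReal.ofReal (4^dd * ε / c) * m U := mul_le_mul_right (measure_mono hUnion) _

lemma tendsto_one_sub_aux : Tendsto (fun t : ℝ => 1 - t) (𝓝[>] (0:ℝ)) (𝓝[<] (1:ℝ)) := by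
  apply tendsto_nhdsWithin_of_tendsto_nhds_of_eventually_within
  · have h : Tendsto (fun t : ℝ => 1 - t) (𝓝 (0:ℝ)) (𝓝 (1 - 0)) :=
      (continuous_const.sub continuous_id).tendsto 0
    rw [sub_zero] at h
    exact h.mono_left nhdsWithin_le_nhds
  · filter_upwards [self_mem_nhdsWithin] with t ht
    simp only [Set.mem_Ioi] at ht
    simp only [Set.mem_Iio]
    linarith

lemma radial_param (d : ℕ) (φ : (Fin d → ℂ) → ℂ) (ζ : Fin d → ℂ) (L : ℂ)
    (h : HasRadialLimit d φ ζ L) :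
    Tendsto (fun t : ℝ => φ (fun j => ((1 - t : ℝ) : ℂ) * ζ j)) (𝓝[>] (0:ℝ)) (𝓝 L) :=
  h.comp tendsto_one_sub_aux

lemma slice_mem_polyDisk (d : ℕ) (ζ : Fin d → ℂ) (hζ : ζ ∈ polyTorus d)
    (t : ℝ) (ht0 : 0 < t) (ht1 : t ≤ 1) :
    (fun j => ((1 - t : ℝ) : ℂ) * ζ j) ∈ polyDisk d := by
  intro j
  rw [norm_mul, hζ j, mul_one, Complex.norm_real, Real.norm_eq_abs,
    _root_.abs_of_nonneg (by linarith : (0:ℝ) ≤ 1 - t)]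
  linarith

lemma phi_slice_contOn (d : ℕ) (p q : MvPolynomial (Fin d) ℂ)
    (hstable : ∀ z ∈ polyDisk d, MvPolynomial.eval z p ≠ 0)
    (ζ : Fin d → ℂ) (hζ : ζ ∈ polyTorus d) (R₀ : ℝ) (hR₀ : 0 < R₀) :
    ContinuousOn (fun t : ℝ =>
      MvPolynomial.eval (fun j => ((1 - t : ℝ) : ℂ) * ζ j) q /
        MvPolynomial.eval (fun j => ((1 - t : ℝ) : ℂ) * ζ j) p) (Set.Icc R₀ 1) := by
  have hZ : Continuous (fun t : ℝ => (fun j => ((1 - t : ℝ) : ℂ) * ζ j)) := by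
    apply continuous_pi
    intro j
    exact (Complex.continuous_ofReal.comp (continuous_const.sub continuous_id)).mul continuous_const
  apply ContinuousOn.div
  · exact ((MvPolynomial.continuous_eval q).comp hZ).continuousOn
  · exact ((MvPolynomial.continuous_eval p).comp hZ).continuousOn
  · intro t ht
    exact hstable _ (slice_mem_polyDisk d ζ hζ t (lt_of_lt_of_le hR₀ ht.1) ht.2)

lemma denom_lower (d : ℕ) (p q : MvPolynomial (Fin d) ℂ)
    (hstable : ∀ z ∈ polyDisk d, MvPolynomial.eval z p ≠ 0)
    (hmaps : ∀ z ∈ polyDisk d, ‖MvPolynomial.eval z q / MvPolynomial.eval z p‖ < 1)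
    (α : ℂ) (hα : ‖α‖ = 1)
    (ζ : Fin d → ℂ) (hζ : ζ ∈ polyTorus d) (Lζ : ℂ) (hLα : Lζ ≠ α)
    (hlim : Tendsto (fun t : ℝ => MvPolynomial.eval (fun j => ((1 - t : ℝ) : ℂ) * ζ j) q /
        MvPolynomial.eval (fun j => ((1 - t : ℝ) : ℂ) * ζ j) p) (𝓝[>] (0:ℝ)) (𝓝 Lζ)) :
    ∃ C : ℝ, 0 < C ∧ ∀ t : ℝ, 0 < t → t ≤ 1 →
      C ≤ ‖α - MvPolynomial.eval (fun j => ((1 - t : ℝ) : ℂ) * ζ j) q /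
        MvPolynomial.eval (fun j => ((1 - t : ℝ) : ℂ) * ζ j) p‖ := by
  set Φ : ℝ → ℂ := fun t => MvPolynomial.eval (fun j => ((1 - t : ℝ) : ℂ) * ζ j) q /
        MvPolynomial.eval (fun j => ((1 - t : ℝ) : ℂ) * ζ j) p with hΦ
  have hαne : ∀ t : ℝ, 0 < t → t ≤ 1 → α - Φ t ≠ 0 := by
    intro t ht0 ht1 hcon
    have h1 := hmaps _ (slice_mem_polyDisk d ζ hζ t ht0 ht1)
    rw [sub_eq_zero] at hcon
    simp only [hΦ] at hcon
    rw [← hcon, hα] at h1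
    exact lt_irrefl 1 h1
  have h0 : 0 < ‖α - Lζ‖ := by
    rw [norm_pos_iff, sub_ne_zero]
    exact fun h => hLα h.symm
  have hev : ∀ᶠ t in 𝓝[>] (0:ℝ), ‖α - Lζ‖/2 < ‖α - Φ t‖ :=
    ((tendsto_const_nhds.sub hlim).norm).eventually (eventually_gt_nhds (by linarith))
  rw [Filter.eventually_iff] at hev
  obtain ⟨u, hu, hsub⟩ := mem_nhdsGT_iff_exists_Ioc_subset.mp hev
  rw [Set.mem_Ioi] at hu
  by_cases hR1 : 1 ≤ u
  · refine ⟨‖α - Lζ‖/2, by linarith, ?_⟩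
    intro t ht0 ht1
    exact le_of_lt (hsub ⟨ht0, le_trans ht1 hR1⟩)
  · push_neg at hR1
    have hconts : ContinuousOn (fun t => ‖α - Φ t‖) (Set.Icc u 1) :=
      (continuousOn_const.sub (phi_slice_contOn d p q hstable ζ hζ u hu)).norm
    have hne : (Set.Icc u 1).Nonempty := ⟨u, le_refl u, le_of_lt hR1⟩
    obtain ⟨t₀, ht₀mem, ht₀min⟩ := isCompact_Icc.exists_isMinOn hne hconts
    have hgt₀ : 0 < ‖α - Φ t₀‖ := by
      rw [norm_pos_iff]
      exact hαne t₀ (lt_of_lt_of_le hu ht₀mem.1) ht₀mem.2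
    refine ⟨min (‖α - Lζ‖/2) ‖α - Φ t₀‖, lt_min (by linarith) hgt₀, ?_⟩
    intro t ht0 ht1
    by_cases htu : t ≤ u
    · exact le_trans (min_le_left _ _) (le_of_lt (hsub ⟨ht0, htu⟩))
    · push_neg at htu
      exact le_trans (min_le_right _ _) (ht₀min ⟨le_of_lt htu, ht1⟩)

/-- Let `φ` be a rational inner function on the polydisk `𝔻^d` and let
`α ∈ 𝕋`. Then the support of the Clark measure `σ_α` is contained in the unimodular
level set `C_α(φ)`. -/
theorem support_clark_subset_levelSet
    (d : ℕ) (hd : 0 < d) (p q : MvPolynomial (Fin d) ℂ)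
    (hRIF : IsRIFd d p q) (α : ℂ) (hα : ‖α‖ = 1)
    (σ : Measure (Fin d → ℂ))
    (hσ : IsClarkMeasureD d (fun z => MvPolynomial.eval z q / MvPolynomial.eval z p) α σ) :
    measureSupport σ ⊆
      levelSetD d (fun z => MvPolynomial.eval z q / MvPolynomial.eval z p) α := by
  classical
  intro ζ₀ hζ₀
  have hζ₀T : ζ₀ ∈ polyTorus d := by
    by_contra hnot
    have h1 := hζ₀ (polyTorus d)ᶜ (isClosed_polyTorus d).isOpen_compl hnot
    rw [hσ.1] at h1
    exact lt_irrefl 0 h1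
  by_contra hnotin
  obtain ⟨δ, hδ0, hδ⟩ : ∃ δ : ℝ, 0 < δ ∧
      ∀ ζ, ζ ∈ Metric.ball ζ₀ δ →
        ¬ (ζ ∈ polyTorus d ∧
            HasRadialLimit d (fun z => MvPolynomial.eval z q / MvPolynomial.eval z p) ζ α) := by
    unfold levelSetD at hnotin
    rw [Metric.mem_closure_iff] at hnotin
    push_neg at hnotin
    obtain ⟨ε, hε0, hball⟩ := hnotin
    refine ⟨ε, hε0, ?_⟩
    intro ζ hζball hmem
    have h2 := hball ζ hmem
    rw [Metric.mem_ball, dist_comm] at hζball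
    linarith
  -- radial limits exist everywhere on the torus
  have hLex : ∀ ζ : Fin d → ℂ, ∃ L : ℂ, ζ ∈ polyTorus d →
      HasRadialLimit d (fun z => MvPolynomial.eval z q / MvPolynomial.eval z p) ζ L := by
    intro ζ
    by_cases h : ζ ∈ polyTorus d
    · obtain ⟨L, hL⟩ := exists_radial_limit d p q hRIF.stable hRIF.mapsToDisk ζ h
      exact ⟨L, fun _ => hL⟩
    · exact ⟨0, fun h' => absurd h' h⟩
  choose L hL using hLex
  set T : Set (Fin d → ℂ) := Metric.ball ζ₀ δ ∩ polyTorus d with hT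
  have hTprop : ∀ ζ ∈ T, L ζ ≠ α := by
    rintro ζ ⟨hb, ht⟩ hcon
    exact hδ ζ hb ⟨ht, hcon ▸ hL ζ ht⟩
  -- lower regularity constant
  set c : ℝ := (1/(16*Real.pi))^d with hc
  have hc0 : 0 < c := by rw [hc]; positivity
  have hm_lower : ∀ ζ ∈ polyTorus d, ∀ t : ℝ, 0 < t → t ≤ 1 →
      ENNReal.ofReal (c * t^d) ≤ torusLebesgue d (Metric.closedBall ζ t) := by
    intro ζ hζ t ht0 ht1
    have h1 := torusLebesgue_ball_lower d ζ hζ t ht0 ht1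
    have heq : (t/(16*Real.pi))^d = c * t^d := by
      rw [hc, ← mul_pow]
      congr 1
      ring
    rwa [heq] at h1
  -- uniform bound at every point of T
  have hBoundAll : ∀ ζ ∈ T, ∃ M : ℝ, 0 ≤ M ∧ ∀ t : ℝ, 0 < t → t ≤ 1 →
      σ (Metric.closedBall ζ t) ≤ ENNReal.ofReal (M * t^d) := by
    intro ζ hζT
    have hζtor : ζ ∈ polyTorus d := hζT.2
    have hlim := radial_param d _ ζ (L ζ) (hL ζ hζtor)
    obtain ⟨C, hC0, hCb⟩ := denom_lower d p q hRIF.stable hRIF.mapsToDisk α hα ζ hζtor (L ζ)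
      (hTprop ζ hζT) hlim
    refine ⟨4^d * (1/C^2), by positivity, ?_⟩
    intro t ht0 ht1
    refine le_trans (clark_ball_bound d _ α σ hσ ζ hζtor t ht0 ht1)
      (ENNReal.ofReal_le_ofReal ?_)
    set w := MvPolynomial.eval (fun j => ((1 - t : ℝ):ℂ) * ζ j) q /
      MvPolynomial.eval (fun j => ((1 - t : ℝ):ℂ) * ζ j) p with hw
    show (4*t)^d * ((1 - ‖w‖^2)/‖α - w‖^2) ≤ 4^d * (1/C^2) * t^d
    have h1 : ‖w‖ < 1 := hRIF.mapsToDisk _ (slice_mem_polyDisk d ζ hζtor t ht0 ht1)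
    have h2 : C ≤ ‖α - w‖ := hCb t ht0 ht1
    have hU : (1 - ‖w‖^2)/‖α - w‖^2 ≤ 1/C^2 := by
      apply div_le_div₀ (by norm_num) (by nlinarith [norm_nonneg w]) (by positivity)
        (by nlinarith [norm_nonneg (α - w)])
    calc (4*t)^d * ((1 - ‖w‖^2)/‖α - w‖^2) ≤ (4*t)^d * (1/C^2) :=
          mul_le_mul_of_nonneg_left hU (by positivity)
      _ = 4^d * (1/C^2) * t^d := by rw [mul_pow]; ring
  -- vanishing bound at unimodular points of T
  have hBoundG : ∀ ζ ∈ T, ‖L ζ‖ = 1 → ∀ ε : ℝ, 0 < ε → ∃ R : ℝ, 0 < R ∧ R ≤ 1 ∧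
      ∀ t : ℝ, 0 < t → t ≤ R → σ (Metric.closedBall ζ t) ≤ ENNReal.ofReal (ε * t^d) := by
    intro ζ hζT hnorm ε hε
    have hζtor : ζ ∈ polyTorus d := hζT.2
    have hlim := radial_param d _ ζ (L ζ) (hL ζ hζtor)
    have hLne : (0:ℝ) < ‖α - L ζ‖ := by
      rw [norm_pos_iff, sub_ne_zero]
      exact fun h => (hTprop ζ hζT) h.symm
    have hUlim : Tendsto (fun t : ℝ =>
        (1 - ‖MvPolynomial.eval (fun j => ((1 - t:ℝ):ℂ) * ζ j) q /
            MvPolynomial.eval (fun j => ((1 - t:ℝ):ℂ) * ζ j) p‖^2) /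
          ‖α - MvPolynomial.eval (fun j => ((1 - t:ℝ):ℂ) * ζ j) q /
            MvPolynomial.eval (fun j => ((1 - t:ℝ):ℂ) * ζ j) p‖^2) (𝓝[>] (0:ℝ))
        (𝓝 ((1 - ‖L ζ‖^2) / ‖α - L ζ‖^2)) := by
      apply Tendsto.div
      · exact tendsto_const_nhds.sub ((hlim.norm).pow 2)
      · exact ((tendsto_const_nhds.sub hlim).norm).pow 2
      · exact ne_of_gt (by positivity)
    rw [hnorm] at hUlim
    simp only [one_pow, sub_self, zero_div] at hUlim
    have h4 : (0:ℝ) < 4^d := by positivity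
    have hev := hUlim.eventually (eventually_lt_nhds (by positivity : (0:ℝ) < ε/4^d))
    rw [Filter.eventually_iff] at hev
    obtain ⟨u, hu, hsub⟩ := mem_nhdsGT_iff_exists_Ioc_subset.mp hev
    rw [Set.mem_Ioi] at hu
    refine ⟨min u 1, lt_min hu one_pos, min_le_right _ _, ?_⟩
    intro t ht0 htR
    have htu : t ≤ u := le_trans htR (min_le_left _ _)
    have ht1 : t ≤ 1 := le_trans htR (min_le_right _ _)
    have hUt := hsub ⟨ht0, htu⟩
    rw [Set.mem_setOf_eq] at hUt
    refine le_trans (clark_ball_bound d _ α σ hσ ζ hζtor t ht0 ht1)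
      (ENNReal.ofReal_le_ofReal ?_)
    set w := MvPolynomial.eval (fun j => ((1 - t : ℝ):ℂ) * ζ j) q /
      MvPolynomial.eval (fun j => ((1 - t : ℝ):ℂ) * ζ j) p with hw
    show (4*t)^d * ((1 - ‖w‖^2)/‖α - w‖^2) ≤ ε * t^d
    calc (4*t)^d * ((1 - ‖w‖^2)/‖α - w‖^2) ≤ (4*t)^d * (ε/4^d) :=
          mul_le_mul_of_nonneg_left (le_of_lt hUt) (by positivity)
      _ = ε * t^d := by rw [mul_pow]; field_simp
  -- the good set and bad sets
  set G : Set (Fin d → ℂ) := {ζ | ζ ∈ T ∧ ‖L ζ‖ = 1} with hG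
  set N : ℕ → Set (Fin d → ℂ) := fun n => {ζ | ζ ∈ T ∧ ¬ (‖L ζ‖ = 1) ∧
      ∀ t : ℝ, 0 < t → t ≤ 1 → σ (Metric.closedBall ζ t) ≤ ENNReal.ofReal ((n:ℝ) * t^d)} with hN
  -- σ G = 0
  have hGkey : ∀ η : ℝ, 0 < η → σ G ≤ ENNReal.ofReal η := by
    intro η hη
    set mU : ℝ := (torusLebesgue d Set.univ).toReal with hmU
    have hmU0 : 0 ≤ mU := ENNReal.toReal_nonneg
    set ε : ℝ := (c * η) / (4^d * (mU + 1)) with hε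
    have hε0 : 0 < ε := by positivity
    have happ := vitali_null (Fin d → ℂ) σ (torusLebesgue d) d c ε hc0 (le_of_lt hε0)
      G Set.univ isOpen_univ (Set.subset_univ _)
      (fun ζ hζG t ht0 ht1 => hm_lower ζ hζG.1.2 t ht0 ht1)
      (fun ζ hζG => hBoundG ζ hζG.1 hζG.2 ε hε0)
    have heq : 4^d * ε / c * mU = η * (mU / (mU+1)) := by
      rw [hε]
      field_simp
    calc σ G ≤ ENNReal.ofReal (4^d * ε / c) * torusLebesgue d Set.univ := happ
      _ = ENNReal.ofReal (4^d * ε / c) * ENNReal.ofReal mU := by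
          rw [hmU, ENNReal.ofReal_toReal (measure_ne_top _ _)]
      _ = ENNReal.ofReal (4^d * ε / c * mU) := (ENNReal.ofReal_mul (by positivity)).symm
      _ ≤ ENNReal.ofReal η := by
          apply ENNReal.ofReal_le_ofReal
          rw [heq]
          have hfrac : mU / (mU + 1) ≤ 1 := by
            rw [div_le_one (by linarith)]
            linarith
          nlinarith
  have hG0 : σ G = 0 := by
    by_contra h
    have h1 : 0 < σ G := pos_iff_ne_zero.mpr h
    obtain ⟨η, hη0, hηlt⟩ : ∃ η : ℝ, 0 < η ∧ ENNReal.ofReal η < σ G := by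
      by_cases htop : σ G = ⊤
      · exact ⟨1, one_pos, by rw [htop]; exact ENNReal.ofReal_lt_top⟩
      · refine ⟨(σ G).toReal / 2, ?_, ?_⟩
        · have := ENNReal.toReal_pos h htop
          linarith
        · rw [ENNReal.ofReal_lt_iff_lt_toReal (by positivity) htop]
          have := ENNReal.toReal_pos h htop
          linarith
    exact absurd (hGkey η hη0) (not_le.mpr hηlt)
  -- σ (N n) = 0
  have hN0 : ∀ n : ℕ, σ (N n) = 0 := by
    intro n
    have hmN : torusLebesgue d (N n) = 0 := by
      apply measure_mono_null _ (MeasureTheory.ae_iff.mp hRIF.inner)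
      rintro ζ ⟨hζT', hne, -⟩
      simp only [Set.mem_setOf_eq]
      rintro ⟨L', hL'1, hL'lim⟩
      have huniq : L' = L ζ := tendsto_nhds_unique hL'lim (hL ζ hζT'.2)
      exact hne (huniq ▸ hL'1)
    have hNkey : ∀ η : ℝ, 0 < η → σ (N n) ≤ ENNReal.ofReal η := by
      intro η hη
      set η' : ℝ := (c * η) / (4^d * ((n:ℝ) + 1)) with hη'
      have hη'0 : 0 < η' := by positivity
      have hlt : torusLebesgue d (N n) < ENNReal.ofReal η' := by
        rw [hmN]
        exact ENNReal.ofReal_pos.mpr hη'0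
      obtain ⟨W, hWsup, hWopen, hWlt⟩ :=
        Set.exists_isOpen_lt_of_lt (N n) (ENNReal.ofReal η') hlt
      have happ := vitali_null (Fin d → ℂ) σ (torusLebesgue d) d c (n:ℝ) hc0 (Nat.cast_nonneg n)
        (N n) W hWopen hWsup
        (fun ζ hζN t ht0 ht1 => hm_lower ζ hζN.1.2 t ht0 ht1)
        (fun ζ hζN => ⟨1, one_pos, le_refl 1, hζN.2.2⟩)
      have heq : 4^d * (n:ℝ) / c * η' = η * ((n:ℝ) / ((n:ℝ)+1)) := by
        rw [hη']
        field_simp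
      calc σ (N n) ≤ ENNReal.ofReal (4^d * (n:ℝ) / c) * torusLebesgue d W := happ
        _ ≤ ENNReal.ofReal (4^d * (n:ℝ) / c) * ENNReal.ofReal η' :=
            mul_le_mul_right (le_of_lt hWlt) _
        _ = ENNReal.ofReal (4^d * (n:ℝ) / c * η') := (ENNReal.ofReal_mul (by positivity)).symm
        _ ≤ ENNReal.ofReal η := by
            apply ENNReal.ofReal_le_ofReal
            rw [heq]
            have hfrac : (n:ℝ) / ((n:ℝ) + 1) ≤ 1 := by
              rw [div_le_one (by positivity)]
              linarith
            nlinarith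
    by_contra h
    have h1 : 0 < σ (N n) := pos_iff_ne_zero.mpr h
    obtain ⟨η, hη0, hηlt⟩ : ∃ η : ℝ, 0 < η ∧ ENNReal.ofReal η < σ (N n) := by
      by_cases htop : σ (N n) = ⊤
      · exact ⟨1, one_pos, by rw [htop]; exact ENNReal.ofReal_lt_top⟩
      · refine ⟨(σ (N n)).toReal / 2, ?_, ?_⟩
        · have := ENNReal.toReal_pos h htop
          linarith
        · rw [ENNReal.ofReal_lt_iff_lt_toReal (by positivity) htop]
          have := ENNReal.toReal_pos h htop
          linarith
    exact absurd (hNkey η hη0) (not_le.mpr hηlt)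
  -- T is covered
  have hTsub : T ⊆ G ∪ ⋃ n : ℕ, N n := by
    intro ζ hζT
    by_cases h : ‖L ζ‖ = 1
    · exact Or.inl ⟨hζT, h⟩
    · obtain ⟨M, hM0, hMb⟩ := hBoundAll ζ hζT
      refine Or.inr (Set.mem_iUnion.mpr ⟨⌈M⌉₊, hζT, h, ?_⟩)
      intro t ht0 ht1
      refine le_trans (hMb t ht0 ht1) (ENNReal.ofReal_le_ofReal ?_)
      have h1 : M ≤ ((⌈M⌉₊ : ℕ):ℝ) := Nat.le_ceil M
      have h2 : (0:ℝ) ≤ t^d := by positivity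
      nlinarith
  have hσT : σ T = 0 := by
    apply le_antisymm _ zero_le
    calc σ T ≤ σ (G ∪ ⋃ n : ℕ, N n) := measure_mono hTsub
      _ ≤ σ G + σ (⋃ n : ℕ, N n) := measure_union_le _ _
      _ ≤ 0 + ∑' n : ℕ, σ (N n) := by
          rw [hG0]
          exact add_le_add_right (measure_iUnion_le _) 0
      _ = 0 := by
          rw [zero_add, ENNReal.tsum_eq_zero.mpr hN0]
  -- conclusion
  have hball0 : σ (Metric.ball ζ₀ δ) = 0 := by
    apply le_antisymm _ zero_le
    have hsplit : Metric.ball ζ₀ δ ⊆ T ∪ (polyTorus d)ᶜ := by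
      intro x hx
      by_cases h : x ∈ polyTorus d
      · exact Or.inl ⟨hx, h⟩
      · exact Or.inr h
    calc σ (Metric.ball ζ₀ δ) ≤ σ (T ∪ (polyTorus d)ᶜ) := measure_mono hsplit
      _ ≤ σ T + σ (polyTorus d)ᶜ := measure_union_le _ _
      _ = 0 := by rw [hσT, hσ.1, add_zero]
  have hpos := hζ₀ (Metric.ball ζ₀ δ) Metric.isOpen_ball (Metric.mem_ball_self hδ0)
  rw [hball0] at hpos
  exact lt_irrefl 0 hpos
end
end

section
/- Let μ be a positive Borel measure on 𝕋^d with total mass 1 which is pluriharmonic, i.e. its Poisson integral z ↦ ∫_{𝕋^d} P_z(ζ) dμ(ζ) is the real part of a holomorphic function on 𝔻^d. Then there exists a holomorphic function φ_μ : 𝔻^d → 𝔻 such that (1−|φ_μ(z)|²)/|1−φ_μ(z)|² = ∫_{𝕋^d} P_z(ζ) dμ(ζ) for all z ∈ 𝔻^d; that is, μ is the Aleksandrov–Clark measure of φ_μ for the parameter value α = 1. -/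
open MeasureTheory Complex Filter Topology

noncomputable section

lemma normSq_helper (w : ℂ) : ‖w‖ ^ 2 = w.re ^ 2 + w.im ^ 2 := by
  rw [Complex.sq_norm, Complex.normSq_apply]; ring

/-- Let `μ` be a positive Borel probability measure on `𝕋^d` which is
pluriharmonic, i.e. its Poisson integral is the real part of a function holomorphic on
`𝔻^d`. Then there is a holomorphic `φ_μ : 𝔻^d → 𝔻` such that
`(1−|φ_μ(z)|²)/|1−φ_μ(z)|² = ∫ P_z dμ` on `𝔻^d`; that is, `μ` is the Aleksandrov–Clark
measure of `φ_μ` for the parameter `α = 1`. -/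
theorem pluriharmonic_measure_is_clark
    (d : ℕ) (hd : 0 < d) (μ : Measure (Fin d → ℂ)) [IsProbabilityMeasure μ]
    (hμtorus : μ (polyTorus d)ᶜ = 0)
    (H : (Fin d → ℂ) → ℂ)
    (hH : DifferentiableOn ℂ H (polyDisk d))
    (hHre : ∀ z ∈ polyDisk d, (H z).re = ∫ ζ, poissonD d z ζ ∂μ) :
    ∃ φ : (Fin d → ℂ) → ℂ,
      DifferentiableOn ℂ φ (polyDisk d) ∧
      (∀ z ∈ polyDisk d, ‖φ z‖ < 1) ∧
      ∀ z ∈ polyDisk d,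
        (1 - ‖φ z‖ ^ 2) / ‖1 - φ z‖ ^ 2 = ∫ ζ, poissonD d z ζ ∂μ := by
  -- a.e. every point lies on the torus
  have hae : ∀ᵐ ζ ∂μ, ζ ∈ polyTorus d := by
    rw [MeasureTheory.ae_iff]
    exact hμtorus
  -- positivity of the Poisson integral on the polydisk
  have hpos : ∀ z ∈ polyDisk d, 0 < ∫ ζ, poissonD d z ζ ∂μ := by
    intro z hz
    have hnum : ∀ j : Fin d, 0 < 1 - ‖z j‖ ^ 2 := by
      intro j
      have h1 : ‖z j‖ ^ 2 < 1 := by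
        have := hz j
        nlinarith [norm_nonneg (z j)]
      linarith
    set c : ℝ := ∏ j, (1 - ‖z j‖ ^ 2) / 4 with hc_def
    have hc : 0 < c := Finset.prod_pos (fun j _ => div_pos (hnum j) (by norm_num))
    set B : ℝ := ∏ j, (1 - ‖z j‖ ^ 2) / (1 - ‖z j‖) ^ 2 with hB_def
    have hfac : ∀ (ζ : Fin d → ℂ), ζ ∈ polyTorus d → ∀ j : Fin d,
        (1 - ‖z j‖ ^ 2) / 4 ≤ (1 - ‖z j‖ ^ 2) / ‖ζ j - z j‖ ^ 2 ∧
        (1 - ‖z j‖ ^ 2) / ‖ζ j - z j‖ ^ 2 ≤ (1 - ‖z j‖ ^ 2) / (1 - ‖z j‖) ^ 2 := by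
      intro ζ hζ j
      have hζj : ‖ζ j‖ = 1 := hζ j
      have hlow : 1 - ‖z j‖ ≤ ‖ζ j - z j‖ := by
        have := norm_sub_norm_le (ζ j) (z j)
        rw [hζj] at this; linarith
      have hlow' : 0 < 1 - ‖z j‖ := by have := hz j; linarith
      have hhigh : ‖ζ j - z j‖ ≤ 2 := by
        have := norm_sub_le (ζ j) (z j)
        rw [hζj] at this
        have := hz j; linarith
      have hpos' : 0 < ‖ζ j - z j‖ := lt_of_lt_of_le hlow' hlow
      constructor
      · apply div_le_div_of_nonneg_left (le_of_lt (hnum j)) (by positivity)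
        nlinarith
      · apply div_le_div_of_nonneg_left (le_of_lt (hnum j)) (by positivity)
        nlinarith
    have hb : ∀ᵐ ζ ∂μ, c ≤ poissonD d z ζ := by
      refine hae.mono fun ζ hζ => ?_
      refine Finset.prod_le_prod (fun j _ => le_of_lt (div_pos (hnum j) (by norm_num))) (fun j _ => (hfac ζ hζ j).1)
    have hub : ∀ᵐ ζ ∂μ, poissonD d z ζ ≤ B := by
      refine hae.mono fun ζ hζ => ?_
      refine Finset.prod_le_prod (fun j _ => ?_) (fun j _ => (hfac ζ hζ j).2)
      exact le_trans (le_of_lt (div_pos (hnum j) (by norm_num))) (hfac ζ hζ j).1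
    have hmeas : Measurable (poissonD d z) := by
      apply Finset.measurable_prod
      intro j _
      exact measurable_const.div (((measurable_pi_apply j).sub measurable_const).norm.pow measurable_const)
    have hint : Integrable (poissonD d z) μ := by
      refine ⟨hmeas.aestronglyMeasurable, ?_⟩
      apply MeasureTheory.HasFiniteIntegral.of_bounded (C := B)
      filter_upwards [hb, hub] with ζ h1 h2
      rw [Real.norm_eq_abs, _root_.abs_of_nonneg (le_trans (le_of_lt hc) h1)]
      exact h2
    have : c ≤ ∫ ζ, poissonD d z ζ ∂μ := by
      calc c = ∫ _, c ∂μ := by simp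
        _ ≤ _ := integral_mono_ae (integrable_const c) hint hb
    linarith
  -- real part of H is positive on the polydisk
  have hre : ∀ z ∈ polyDisk d, 0 < (H z).re := by
    intro z hz; rw [hHre z hz]; exact hpos z hz
  have hne : ∀ z ∈ polyDisk d, H z + 1 ≠ 0 := by
    intro z hz h
    have : (H z + 1).re = 0 := by rw [h]; simp
    simp only [Complex.add_re, Complex.one_re] at this
    have := hre z hz; linarith
  refine ⟨fun z => (H z - 1) / (H z + 1), ?_, ?_, ?_⟩
  · have h1 : DifferentiableOn ℂ (fun z => H z - 1) (polyDisk d) := hH.sub (differentiableOn_const 1)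
    have h2 : DifferentiableOn ℂ (fun z => H z + 1) (polyDisk d) := hH.add (differentiableOn_const 1)
    have h3 : DifferentiableOn ℂ (fun z => (H z - 1) * (H z + 1)⁻¹) (polyDisk d) :=
      h1.mul (h2.inv hne)
    simpa only [div_eq_mul_inv] using h3
  · intro z hz
    have hw := hne z hz
    have ha := hre z hz
    rw [norm_div, div_lt_one (norm_pos_iff.mpr hw)]
    have e1 : ‖H z - 1‖ ^ 2 = (((H z).re - 1) ^ 2 + (H z).im ^ 2) := by
      rw [normSq_helper]
      simp [Complex.sub_re, Complex.sub_im, Complex.add_re, Complex.add_im]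
    have e2 : ‖H z + 1‖ ^ 2 = (((H z).re + 1) ^ 2 + (H z).im ^ 2) := by
      rw [normSq_helper]
      simp [Complex.sub_re, Complex.sub_im, Complex.add_re, Complex.add_im]
    nlinarith [norm_nonneg (H z - 1), norm_nonneg (H z + 1)]
  · intro z hz
    have hw := hne z hz
    have ha := hre z hz
    rw [← hHre z hz]
    have h2 : (1 : ℂ) - (H z - 1) / (H z + 1) = 2 / (H z + 1) := by
      field_simp; ring
    rw [h2, norm_div, norm_div]
    have e1 : ‖H z - 1‖ ^ 2 = (((H z).re - 1) ^ 2 + (H z).im ^ 2) := by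
      rw [normSq_helper]
      simp [Complex.sub_re, Complex.sub_im, Complex.add_re, Complex.add_im]
    have e2 : ‖H z + 1‖ ^ 2 = (((H z).re + 1) ^ 2 + (H z).im ^ 2) := by
      rw [normSq_helper]
      simp [Complex.sub_re, Complex.sub_im, Complex.add_re, Complex.add_im]
    have e3 : ‖(2 : ℂ)‖ ^ 2 = 4 := by norm_num
    have hSpos : 0 < ((H z).re + 1) ^ 2 + (H z).im ^ 2 := by nlinarith
    rw [div_pow, div_pow, e1, e2, e3]
    set A := (H z).re
    set Bi := (H z).im
    field_simp
    ring
end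
end

section
/- Let φ = p̃/p be a rational inner function on 𝔻^d of polydegree (n₁,…,n_d), i.e. p has degree n_j in the variable z_j. Fix ζ' = (ζ₁,…,ζ_{d−1}) ∈ 𝕋^{d−1} and suppose φ has no singularity of the form (ζ', τ) with τ ∈ 𝕋. Then the one-variable function φ_{ζ'}(z_d) = φ(ζ₁,…,ζ_{d−1}, z_d) is a finite Blaschke product of degree exactly n_d: there exist λ ∈ 𝕋 and points a₁,…,a_{n_d} ∈ 𝔻 such that φ_{ζ'}(z) = λ ∏_{k=1}^{n_d} (z − a_k)/(1 − conj(a_k) z). -/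
open MeasureTheory Complex Filter Topology

noncomputable section

/-- `pt` is the reflection `p̃(z) = z₁^{n₁}⋯z_d^{n_d} conj(p(1/conj z₁, …, 1/conj z_d))`
of `p` at polydegree `n`. -/
def IsReflectionD (d : ℕ) (n : Fin d → ℕ) (p pt : MvPolynomial (Fin d) ℂ) : Prop :=
  ∀ z : Fin d → ℂ, (∀ j, z j ≠ 0) →
    MvPolynomial.eval z pt =
      (∏ j, z j ^ n j) *
        (starRingEnd ℂ) (MvPolynomial.eval (fun j => ((starRingEnd ℂ) (z j))⁻¹) p)

/-- slice of a multivariable polynomial: substitute `c` in the first `d` variables. -/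
def slicePoly {d : ℕ} (c : Fin d → ℂ) (p : MvPolynomial (Fin (d+1)) ℂ) : Polynomial ℂ :=
  MvPolynomial.eval₂ Polynomial.C (Fin.lastCases Polynomial.X (fun i => Polynomial.C (c i))) p

lemma slicePoly_eval {d : ℕ} (c : Fin d → ℂ) (p : MvPolynomial (Fin (d+1)) ℂ) (z : ℂ) :
    (slicePoly c p).eval z = MvPolynomial.eval (Fin.snoc c z) p := by
  unfold slicePoly
  rw [show (Polynomial.eval z (MvPolynomial.eval₂ Polynomial.C
      (Fin.lastCases Polynomial.X (fun i => Polynomial.C (c i))) p)) =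
      (Polynomial.evalRingHom z) (MvPolynomial.eval₂ Polynomial.C
      (Fin.lastCases Polynomial.X (fun i => Polynomial.C (c i))) p) from rfl,
    MvPolynomial.eval₂_comp_left]
  have h1 : (Polynomial.evalRingHom z).comp Polynomial.C = RingHom.id ℂ := by
    ext a; simp
  have h2 : ((Polynomial.evalRingHom z) ∘
      (Fin.lastCases Polynomial.X (fun i => Polynomial.C (c i)))) = Fin.snoc c z := by
    funext j
    induction j using Fin.lastCases with
    | last => simp
    | cast i => simp
  rw [h1, h2]
  rfl

lemma slicePoly_natDegree_le {d : ℕ} (c : Fin d → ℂ) (p : MvPolynomial (Fin (d+1)) ℂ) :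
    (slicePoly c p).natDegree ≤ MvPolynomial.degreeOf (Fin.last d) p := by
  unfold slicePoly
  rw [MvPolynomial.eval₂_eq]
  apply Polynomial.natDegree_sum_le_of_forall_le
  intro m hm
  have hmon : (∏ i ∈ m.support,
      (Fin.lastCases Polynomial.X (fun i => Polynomial.C (c i)) : Fin (d+1) → Polynomial ℂ) i ^ m i).natDegree
      ≤ m (Fin.last d) := by
    refine le_trans (Polynomial.natDegree_prod_le _ _) ?_
    have : ∀ i ∈ m.support,
        ((Fin.lastCases Polynomial.X (fun i => Polynomial.C (c i)) : Fin (d+1) → Polynomial ℂ) i ^ m i).natDegree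
        ≤ if i = Fin.last d then m (Fin.last d) else 0 := by
      intro i _
      by_cases h : i = Fin.last d
      · subst h; simp [Polynomial.natDegree_pow]
      · rcases Fin.exists_castSucc_eq.mpr h with ⟨i', rfl⟩
        simp [Fin.lastCases_castSucc, Polynomial.natDegree_pow]
    refine le_trans (Finset.sum_le_sum this) ?_
    rw [Finset.sum_ite_eq' m.support (Fin.last d) (fun _ => m (Fin.last d))]
    split <;> simp
  refine le_trans (Polynomial.natDegree_mul_le) ?_
  simp only [Polynomial.natDegree_C, zero_add]
  refine le_trans hmon ?_
  rw [MvPolynomial.degreeOf_eq_sup]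
  exact Finset.le_sup (f := fun m => m (Fin.last d)) hm

lemma slicePoly_ne_zero {d : ℕ} (p : MvPolynomial (Fin (d+1)) ℂ)
    (hstable : ∀ z ∈ polyDisk (d + 1), MvPolynomial.eval z p ≠ 0)
    (c : Fin d → ℂ) (hc : ∀ i, ‖c i‖ < 1) (z : ℂ) (hz : ‖z‖ < 1) :
    (slicePoly c p).eval z ≠ 0 := by
  rw [slicePoly_eval]
  apply hstable
  intro j
  induction j using Fin.lastCases with
  | last => simpa using hz
  | cast i => simpa using hc i

lemma multiset_prod_bound (s : Multiset ℂ) (k : ℝ) (hk : 0 ≤ k) (u v : ℂ)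
    (h : ∀ w ∈ s, k * ‖v - w‖ ≤ ‖u - w‖) :
    k ^ Multiset.card s * (s.map fun w => ‖v - w‖).prod ≤ (s.map fun w => ‖u - w‖).prod := by
  induction s using Multiset.induction with
  | empty => simp
  | cons a s ih =>
    simp only [Multiset.map_cons, Multiset.prod_cons, Multiset.card_cons, pow_succ]
    have h1 := h a (Multiset.mem_cons_self a s)
    have h2 := ih (fun w hw => h w (Multiset.mem_cons_of_mem hw))
    calc k ^ Multiset.card s * k * (‖v - a‖ * (Multiset.map (fun w => ‖v - w‖) s).prod)
        = (k * ‖v - a‖) * (k ^ Multiset.card s * (Multiset.map (fun w => ‖v - w‖) s).prod) := by ring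
      _ ≤ ‖u - a‖ * (Multiset.map (fun w => ‖u - w‖) s).prod := by
          apply mul_le_mul h1 h2
          · apply mul_nonneg (by positivity)
            apply Multiset.prod_nonneg
            intro x hx
            rcases Multiset.mem_map.mp hx with ⟨w, _, rfl⟩
            exact norm_nonneg _
          · exact norm_nonneg _

lemma norm_multiset_prod' (s : Multiset ℂ) : ‖s.prod‖ = (s.map fun x => ‖x‖).prod := by
  induction s using Multiset.induction with
  | empty => simp
  | cons a s ih => simp [norm_mul, ih]

lemma keybound {d : ℕ} (p : MvPolynomial (Fin (d+1)) ℂ)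
    (hstable : ∀ z ∈ polyDisk (d + 1), MvPolynomial.eval z p ≠ 0)
    (c : Fin d → ℂ) (hc : ∀ i, ‖c i‖ < 1) (u v : ℂ) (hu : ‖u‖ < 1) (hv : ‖v‖ < 1) :
    ((1 - ‖u‖) / (1 + ‖v‖)) ^ (MvPolynomial.degreeOf (Fin.last d) p) *
      ‖(slicePoly c p).eval v‖ ≤ ‖(slicePoly c p).eval u‖ := by
  set q := slicePoly c p with hq
  set N := MvPolynomial.degreeOf (Fin.last d) p with hN
  set k : ℝ := (1 - ‖u‖) / (1 + ‖v‖) with hk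
  have hk0 : 0 ≤ k := by
    apply div_nonneg (by linarith) (by positivity)
  have hk1 : k ≤ 1 := by
    rw [div_le_one (by positivity)]
    have := norm_nonneg u; have := norm_nonneg v; linarith
  by_cases hq0 : q = 0
  · simp [hq0]
  · have hsplit : q = Polynomial.C q.leadingCoeff *
        (q.roots.map fun a => Polynomial.X - Polynomial.C a).prod :=
      (IsAlgClosed.splits q).eq_prod_roots
    have hcard : Multiset.card q.roots = q.natDegree :=
      (Polynomial.splits_iff_card_roots).mp (IsAlgClosed.splits q)
    have hroots : ∀ w ∈ q.roots, 1 ≤ ‖w‖ := by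
      intro w hw
      by_contra hlt
      push_neg at hlt
      exact slicePoly_ne_zero p hstable c hc w hlt
        ((Polynomial.isRoot_of_mem_roots hw))
    -- evaluate
    have hevalu : ∀ x : ℂ, ‖q.eval x‖ =
        ‖q.leadingCoeff‖ * (q.roots.map fun w => ‖x - w‖).prod := by
      intro x
      conv_lhs => rw [hsplit]
      rw [Polynomial.eval_mul, Polynomial.eval_C, norm_mul,
        Polynomial.eval_multiset_prod, norm_multiset_prod', Multiset.map_map,
        Multiset.map_map]
      congr 2
      ext w
      simp
    rw [hevalu u, hevalu v]
    have hperroot : ∀ w ∈ q.roots, k * ‖v - w‖ ≤ ‖u - w‖ := by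
      intro w hw
      have h1 : 1 ≤ ‖w‖ := hroots w hw
      have h2 : ‖v - w‖ ≤ (1 + ‖v‖) * ‖w‖ := by
        calc ‖v - w‖ ≤ ‖v‖ + ‖w‖ := norm_sub_le _ _
          _ ≤ (1 + ‖v‖) * ‖w‖ := by nlinarith [norm_nonneg v]
      have h3 : (1 - ‖u‖) * ‖w‖ ≤ ‖u - w‖ := by
        have : ‖w‖ - ‖u‖ ≤ ‖u - w‖ := by
          have := norm_sub_norm_le w u
          rw [norm_sub_rev] at this
          linarith [abs_le.mp (abs_norm_sub_norm_le w u)]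
        nlinarith [norm_nonneg u]
      calc k * ‖v - w‖ ≤ k * ((1 + ‖v‖) * ‖w‖) := by
            apply mul_le_mul_of_nonneg_left h2 hk0
        _ = (1 - ‖u‖) * ‖w‖ := by
            rw [hk]; field_simp
        _ ≤ ‖u - w‖ := h3
    have hmain := multiset_prod_bound q.roots k hk0 u v hperroot
    have hcardle : q.natDegree ≤ N := slicePoly_natDegree_le c p
    have hkpow : k ^ N ≤ k ^ (Multiset.card q.roots) := by
      rw [hcard]
      exact pow_le_pow_of_le_one hk0 hk1 hcardle
    have hprodv : 0 ≤ (q.roots.map fun w => ‖v - w‖).prod := by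
      apply Multiset.prod_nonneg
      intro x hx
      rcases Multiset.mem_map.mp hx with ⟨w, _, rfl⟩
      exact norm_nonneg _
    calc k ^ N * (‖q.leadingCoeff‖ * (q.roots.map fun w => ‖v - w‖).prod)
        = ‖q.leadingCoeff‖ * (k ^ N * (q.roots.map fun w => ‖v - w‖).prod) := by ring
      _ ≤ ‖q.leadingCoeff‖ * (k ^ (Multiset.card q.roots) * (q.roots.map fun w => ‖v - w‖).prod) := by
          apply mul_le_mul_of_nonneg_left _ (norm_nonneg _)
          exact mul_le_mul_of_nonneg_right hkpow hprodv
      _ ≤ ‖q.leadingCoeff‖ * (q.roots.map fun w => ‖u - w‖).prod := by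
          apply mul_le_mul_of_nonneg_left hmain (norm_nonneg _)

lemma keybound_limit {d : ℕ} (p : MvPolynomial (Fin (d+1)) ℂ)
    (hstable : ∀ z ∈ polyDisk (d + 1), MvPolynomial.eval z p ≠ 0)
    (ζ' : Fin d → ℂ) (hζ' : ∀ j, ‖ζ' j‖ = 1) (u v : ℂ) (hu : ‖u‖ < 1) (hv : ‖v‖ < 1) :
    ((1 - ‖u‖) / (1 + ‖v‖)) ^ (MvPolynomial.degreeOf (Fin.last d) p) *
      ‖(slicePoly ζ' p).eval v‖ ≤ ‖(slicePoly ζ' p).eval u‖ := by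
  set N := MvPolynomial.degreeOf (Fin.last d) p with hN
  set k : ℝ := (1 - ‖u‖) / (1 + ‖v‖) with hk
  have hcont : ∀ x : ℂ, Continuous fun r : ℝ =>
      MvPolynomial.eval (Fin.snoc (fun i => (r : ℂ) * ζ' i) x) p := by
    intro x
    apply (MvPolynomial.continuous_eval p).comp
    apply continuous_pi
    intro j
    induction j using Fin.lastCases with
    | last => simp only [Fin.snoc_last]; exact continuous_const
    | cast i =>
      simp only [Fin.snoc_castSucc]
      exact (Complex.continuous_ofReal.mul continuous_const)
  have hlim : ∀ x : ℂ, Tendsto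
      (fun r : ℝ => ‖MvPolynomial.eval (Fin.snoc (fun i => (r : ℂ) * ζ' i) x) p‖)
      (𝓝[<] (1:ℝ)) (𝓝 ‖(slicePoly ζ' p).eval x‖) := by
    intro x
    rw [slicePoly_eval]
    have h1 : Tendsto (fun r : ℝ =>
        MvPolynomial.eval (Fin.snoc (fun i => (r : ℂ) * ζ' i) x) p) (𝓝 (1:ℝ))
        (𝓝 (MvPolynomial.eval (Fin.snoc ζ' x) p)) := by
      have := (hcont x).tendsto 1
      simpa using this
    exact (h1.mono_left nhdsWithin_le_nhds).norm
  have hev : ∀ᶠ r : ℝ in 𝓝[<] (1:ℝ),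
      k ^ N * ‖MvPolynomial.eval (Fin.snoc (fun i => (r : ℂ) * ζ' i) v) p‖ ≤
        ‖MvPolynomial.eval (Fin.snoc (fun i => (r : ℂ) * ζ' i) u) p‖ := by
    have hIoo : Set.Ioo (0:ℝ) 1 ∈ 𝓝[<] (1:ℝ) :=
      Ioo_mem_nhdsLT_of_mem (Set.mem_Ioc.mpr ⟨zero_lt_one, le_refl 1⟩)
    filter_upwards [hIoo] with r hr
    have hc : ∀ i, ‖(r : ℂ) * ζ' i‖ < 1 := by
      intro i
      rw [norm_mul, hζ' i, mul_one, Complex.norm_real, Real.norm_eq_abs, abs_of_pos hr.1]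
      exact hr.2
    have := keybound p hstable (fun i => (r : ℂ) * ζ' i) hc u v hu hv
    rw [← hN, ← hk] at this
    simpa [slicePoly_eval] using this
  exact le_of_tendsto_of_tendsto ((hlim v).const_mul _) (hlim u) hev

lemma slice_zero_free {d : ℕ} (p : MvPolynomial (Fin (d+1)) ℂ)
    (hstable : ∀ z ∈ polyDisk (d + 1), MvPolynomial.eval z p ≠ 0)
    (ζ' : Fin d → ℂ) (hζ' : ∀ j, ‖ζ' j‖ = 1) (v : ℂ) (hv : ‖v‖ < 1)
    (hqv : (slicePoly ζ' p).eval v ≠ 0) (u : ℂ) (hu : ‖u‖ < 1) :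
    (slicePoly ζ' p).eval u ≠ 0 := by
  have h := keybound_limit p hstable ζ' hζ' u v hu hv
  have hkpos : (0:ℝ) < ((1 - ‖u‖) / (1 + ‖v‖)) ^ (MvPolynomial.degreeOf (Fin.last d) p) := by
    apply pow_pos
    apply div_pos (by linarith) (by positivity)
  have hvpos : 0 < ‖(slicePoly ζ' p).eval v‖ := norm_pos_iff.mpr hqv
  intro h0
  rw [h0, norm_zero] at h
  nlinarith

lemma conj_inv_of_norm_one {w : ℂ} (hw : ‖w‖ = 1) : ((starRingEnd ℂ) w)⁻¹ = w := by
  have hw0 : w ≠ 0 := by intro h; rw [h, norm_zero] at hw; norm_num at hw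
  have : w * (starRingEnd ℂ) w = 1 := by
    rw [Complex.mul_conj]
    norm_cast
    rw [Complex.normSq_eq_norm_sq]
    rw [hw]; norm_num
  exact inv_eq_of_mul_eq_one_right (by rw [mul_comm] at this; exact this)

lemma slice_reflection {d : ℕ} (n : Fin (d+1) → ℕ) (p pt : MvPolynomial (Fin (d+1)) ℂ)
    (hrefl : IsReflectionD (d+1) n p pt)
    (ζ' : Fin d → ℂ) (hζ' : ∀ j, ‖ζ' j‖ = 1) (z : ℂ) (hz : z ≠ 0) :
    (slicePoly ζ' pt).eval z =
      (∏ i : Fin d, ζ' i ^ n (Fin.castSucc i)) * z ^ n (Fin.last d) *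
        (starRingEnd ℂ) ((slicePoly ζ' p).eval (((starRingEnd ℂ) z)⁻¹)) := by
  have hζ0 : ∀ i, ζ' i ≠ 0 := by
    intro i h
    have := hζ' i; rw [h, norm_zero] at this; norm_num at this
  have hne : ∀ j, (Fin.snoc ζ' z : Fin (d+1) → ℂ) j ≠ 0 := by
    intro j
    induction j using Fin.lastCases with
    | last => simpa using hz
    | cast i => simpa using hζ0 i
  have h := hrefl (Fin.snoc ζ' z) hne
  rw [slicePoly_eval, slicePoly_eval, h]
  congr 1
  · -- the monomial prefactor
    rw [show (fun j => ((Fin.snoc ζ' z : Fin (d+1) → ℂ) j) ^ n j) =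
        Fin.snoc (fun i => ζ' i ^ n (Fin.castSucc i)) (z ^ n (Fin.last d)) from ?_]
    · rw [Fin.prod_snoc]
    · funext j
      induction j using Fin.lastCases with
      | last => simp
      | cast i => simp
  · congr 1
    have : (fun j => ((starRingEnd ℂ) ((Fin.snoc ζ' z : Fin (d+1) → ℂ) j))⁻¹) =
        (Fin.snoc ζ' (((starRingEnd ℂ) z)⁻¹) : Fin (d+1) → ℂ) := by
      funext j
      induction j using Fin.lastCases with
      | last => simp
      | cast i => simp [conj_inv_of_norm_one (hζ' i)]
    rw [this]


/-- Let `φ = p̃/p` be a RIF on `𝔻^{d+1}` of polydegree `n`. Fix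
`ζ' ∈ 𝕋^d` and suppose `φ` has no singularity of the form `(ζ', τ)` with `τ ∈ 𝕋`.
Then the slice `z ↦ φ(ζ', z)` is a finite Blaschke product of degree exactly
`n_{d+1}`: there are `λ ∈ 𝕋` and `a₁, …, a_{n_{d+1}} ∈ 𝔻` with
`φ(ζ', z) = λ ∏ (z − a_k)/(1 − conj(a_k) z)`. -/
theorem slice_is_finite_blaschke_product
    (d : ℕ) (n : Fin (d + 1) → ℕ) (hn : ∀ j, 1 ≤ n j)
    (p pt : MvPolynomial (Fin (d + 1)) ℂ)
    (hdeg : ∀ j, MvPolynomial.degreeOf j p = n j)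
    (hstable : ∀ z ∈ polyDisk (d + 1), MvPolynomial.eval z p ≠ 0)
    (hrefl : IsReflectionD (d + 1) n p pt)
    (hcoprime : ∀ r : MvPolynomial (Fin (d + 1)) ℂ, r ∣ p → r ∣ pt → IsUnit r)
    (ζ' : Fin d → ℂ) (hζ' : ∀ j, ‖ζ' j‖ = 1)
    (hnosing : ¬ ∃ τ : ℂ, ‖τ‖ = 1 ∧
      MvPolynomial.eval (Fin.snoc ζ' τ : Fin (d + 1) → ℂ) p = 0 ∧
      MvPolynomial.eval (Fin.snoc ζ' τ : Fin (d + 1) → ℂ) pt = 0) :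
    ∃ lam : ℂ, ‖lam‖ = 1 ∧
      ∃ a : Fin (n (Fin.last d)) → ℂ, (∀ k, ‖a k‖ < 1) ∧
        ∀ z : ℂ, ‖z‖ < 1 →
          MvPolynomial.eval (Fin.snoc ζ' z : Fin (d + 1) → ℂ) p ≠ 0 →
          MvPolynomial.eval (Fin.snoc ζ' z : Fin (d + 1) → ℂ) pt /
              MvPolynomial.eval (Fin.snoc ζ' z : Fin (d + 1) → ℂ) p =
            lam * ∏ k, (z - a k) / (1 - (starRingEnd ℂ) (a k) * z) := by
  classical
  set N := n (Fin.last d) with hNdef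
  set q : Polynomial ℂ := slicePoly ζ' p with hqdef
  set qt : Polynomial ℂ := slicePoly ζ' pt with hqtdef
  set c : ℂ := ∏ i : Fin d, ζ' i ^ n (Fin.castSucc i) with hcdef
  have hdegN : MvPolynomial.degreeOf (Fin.last d) p = N := hdeg _
  have hrefl' : ∀ z : ℂ, z ≠ 0 → qt.eval z =
      c * z ^ N * (starRingEnd ℂ) (q.eval (((starRingEnd ℂ) z)⁻¹)) :=
    fun z hz => slice_reflection n p pt hrefl ζ' hζ' z hz
  -- no zeros on the circle
  have hcirc : ∀ τ : ℂ, ‖τ‖ = 1 → q.eval τ ≠ 0 := by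
    intro τ hτ h0
    apply hnosing
    refine ⟨τ, hτ, ?_, ?_⟩
    · rw [← slicePoly_eval]; exact h0
    · rw [← slicePoly_eval]
      have hτ0 : τ ≠ 0 := by intro h; rw [h, norm_zero] at hτ; norm_num at hτ
      rw [hrefl' τ hτ0, conj_inv_of_norm_one hτ, h0]
      simp
  have hq0 : q ≠ 0 := by
    intro h
    exact hcirc 1 (norm_one) (by rw [h]; simp)
  -- a point in the disk where q doesn't vanish
  have hvex : ∃ v : ℂ, ‖v‖ < 1 ∧ q.eval v ≠ 0 := by
    have hball : ({x : ℂ | ‖x‖ < 1}).Infinite := by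
      have h0 : {x : ℂ | ‖x‖ < 1} ∈ 𝓝 (0 : ℂ) := by
        have := Metric.ball_mem_nhds (0 : ℂ) zero_lt_one
        simpa [Metric.ball, dist_eq_norm] using this
      exact infinite_of_mem_nhds (0 : ℂ) h0
    have hroots : ({x : ℂ | q.IsRoot x}).Finite := Polynomial.finite_setOf_isRoot hq0
    rcases (hball.diff hroots).nonempty with ⟨v, hv⟩
    exact ⟨v, hv.1, hv.2⟩
  obtain ⟨v, hv1, hv2⟩ := hvex
  -- no zeros in the disk
  have hdisk : ∀ u : ℂ, ‖u‖ < 1 → q.eval u ≠ 0 :=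
    fun u hu => slice_zero_free p hstable ζ' hζ' v hv1 hv2 u hu
  -- all roots strictly outside the closed disk
  have hroots_gt : ∀ w ∈ q.roots, 1 < ‖w‖ := by
    intro w hw
    have hwroot : q.eval w = 0 := Polynomial.isRoot_of_mem_roots hw
    rcases lt_trichotomy ‖w‖ 1 with h | h | h
    · exact absurd hwroot (hdisk w h)
    · exact absurd hwroot (hcirc w h)
    · exact h
  set b : ℂ := q.leadingCoeff with hbdef
  have hb0 : b ≠ 0 := Polynomial.leadingCoeff_ne_zero.mpr hq0
  set R : Multiset ℂ := q.roots with hRdef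
  set m : ℕ := q.natDegree with hmdef
  have hcard : Multiset.card R = m :=
    (Polynomial.splits_iff_card_roots).mp (IsAlgClosed.splits q)
  have hmN : m ≤ N := by
    rw [hmdef, ← hdegN]; exact slicePoly_natDegree_le ζ' p
  have hsplit : q = Polynomial.C b * (R.map fun a => Polynomial.X - Polynomial.C a).prod :=
    (IsAlgClosed.splits q).eq_prod_roots
  have hqeval : ∀ x : ℂ, q.eval x = b * (R.map fun w => x - w).prod := by
    intro x
    conv_lhs => rw [hsplit]
    rw [Polynomial.eval_mul, Polynomial.eval_C, Polynomial.eval_multiset_prod,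
      Multiset.map_map]
    congr 2
    ext w
    simp
  -- the star identity: qt = C (c * conj b) * X^(N-m) * ∏ (1 - conj w · X)
  set P : Polynomial ℂ := Polynomial.C (c * (starRingEnd ℂ) b) * Polynomial.X ^ (N - m) *
      (R.map fun w => 1 - Polynomial.C ((starRingEnd ℂ) w) * Polynomial.X).prod with hPdef
  have hPeval : ∀ x : ℂ, P.eval x = (c * (starRingEnd ℂ) b) * x ^ (N - m) *
      (R.map fun w => 1 - (starRingEnd ℂ) w * x).prod := by
    intro x
    rw [hPdef]
    rw [Polynomial.eval_mul, Polynomial.eval_mul, Polynomial.eval_C, Polynomial.eval_pow,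
      Polynomial.eval_X, Polynomial.eval_multiset_prod, Multiset.map_map]
    congr 2
    ext w
    simp
  have hstar : qt = P := by
    have key : ∀ z : ℂ, z ≠ 0 → qt.eval z = P.eval z := by
      intro z hz
      rw [hrefl' z hz, hPeval z]
      have hu : q.eval (((starRingEnd ℂ) z)⁻¹) =
          b * (R.map fun w => ((starRingEnd ℂ) z)⁻¹ - w).prod := hqeval _
      rw [hu, map_mul]
      rw [show ((starRingEnd ℂ) ((R.map fun w => ((starRingEnd ℂ) z)⁻¹ - w).prod)) =
          (R.map fun w => z⁻¹ - (starRingEnd ℂ) w).prod from ?_]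
      · -- now pure algebra with z^N split
        have hNsplit : z ^ N = z ^ (N - m) * z ^ m := by
          rw [← pow_add, Nat.sub_add_cancel hmN]
        have hzm : z ^ m * (R.map fun w => z⁻¹ - (starRingEnd ℂ) w).prod =
            (R.map fun w => 1 - (starRingEnd ℂ) w * z).prod := by
          have h1 : z ^ m = (R.map fun _ => z).prod := by
            rw [Multiset.map_const', Multiset.prod_replicate, hcard]
          rw [h1, ← Multiset.prod_map_mul]
          apply congrArg
          apply Multiset.map_congr rfl
          intro w _
          field_simp
        calc c * z ^ N * ((starRingEnd ℂ) b * (R.map fun w => z⁻¹ - (starRingEnd ℂ) w).prod)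
            = c * (starRingEnd ℂ) b * z ^ (N - m) *
              (z ^ m * (R.map fun w => z⁻¹ - (starRingEnd ℂ) w).prod) := by
              rw [hNsplit]; ring
          _ = c * (starRingEnd ℂ) b * z ^ (N - m) *
              (R.map fun w => 1 - (starRingEnd ℂ) w * z).prod := by rw [hzm]
      · rw [map_multiset_prod, Multiset.map_map]
        apply congrArg
        apply Multiset.map_congr rfl
        intro w _
        simp [map_sub, map_inv₀]
    have : qt - P = 0 := by
      apply Polynomial.eq_zero_of_infinite_isRoot
      apply Set.Infinite.mono (s := {x : ℂ | x ≠ 0})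
      · intro x hx
        simp only [Set.mem_setOf_eq, Polynomial.IsRoot, Polynomial.eval_sub]
        rw [key x hx]
        ring
      · have : ({x : ℂ | x ≠ 0}) = ({0}ᶜ : Set ℂ) := by ext x; simp
        rw [this]
        exact Set.Finite.infinite_compl (Set.finite_singleton 0)
    linear_combination (norm := module) this
  -- construct lam and a
  set lam : ℂ := c * (starRingEnd ℂ) b / b * (R.map fun w => (starRingEnd ℂ) w / w).prod
    with hlamdef
  have hcnorm : ‖c‖ = 1 := by
    rw [hcdef]
    rw [norm_prod]
    apply Finset.prod_eq_one
    intro i _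
    rw [norm_pow, hζ' i, one_pow]
  have hlamnorm : ‖lam‖ = 1 := by
    rw [hlamdef, norm_mul, norm_div, norm_mul, hcnorm, RCLike.norm_conj]
    rw [one_mul, div_self (norm_ne_zero_iff.mpr hb0), one_mul]
    rw [norm_multiset_prod', Multiset.map_map]
    apply Multiset.prod_eq_one
    intro x hx
    rcases Multiset.mem_map.mp hx with ⟨w, hw, rfl⟩
    have hw1 : 1 < ‖w‖ := hroots_gt w hw
    have hw0 : w ≠ 0 := by intro h; rw [h, norm_zero] at hw1; norm_num at hw1
    simp only [Function.comp_apply, norm_div, RCLike.norm_conj]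
    rw [div_self (by positivity)]
  set L : List ℂ := List.replicate (N - m) 0 ++
      (R.toList.map fun w => ((starRingEnd ℂ) w)⁻¹) with hLdef
  have hL : L.length = N := by
    rw [hLdef, List.length_append, List.length_replicate, List.length_map,
      Multiset.length_toList, hcard]
    exact Nat.sub_add_cancel hmN
  set a : Fin N → ℂ := fun k => L.get (Fin.cast hL.symm k) with hadef
  have hmemL : ∀ x ∈ L, ‖x‖ < 1 := by
    intro x hx
    rw [hLdef] at hx
    rcases List.mem_append.mp hx with h | h
    · rw [List.eq_of_mem_replicate h, norm_zero]; norm_num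
    · rcases List.mem_map.mp h with ⟨w, hw, rfl⟩
      have hw1 : 1 < ‖w‖ := hroots_gt w (by rwa [← Multiset.mem_toList])
      rw [norm_inv, RCLike.norm_conj]
      rw [inv_lt_one_iff₀]
      right; exact hw1
  refine ⟨lam, hlamnorm, a, fun k => hmemL _ (List.get_mem L _), ?_⟩
  intro z hz1 hqz0
  have hqz : q.eval z ≠ 0 := by rw [hqdef, slicePoly_eval]; exact hqz0
  rw [← slicePoly_eval ζ' pt z, ← slicePoly_eval ζ' p z, ← hqdef, ← hqtdef]
  rw [div_eq_iff hqz]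
  -- compute the Fin product as a product over R
  set g : ℂ → ℂ := fun x => (z - x) / (1 - (starRingEnd ℂ) x * z) with hgdef
  have hprod1 : ∏ k : Fin N, g (a k) = (L.map g).prod := by
    rw [hadef]
    rw [Fin.prod_congr' (fun k => g (L.get k)) hL.symm]
    rw [show L.map g = List.ofFn (fun k => g (L.get k)) from ?_]
    · rw [List.prod_ofFn]
    · conv_lhs => rw [← List.ofFn_get L]
      rw [List.map_ofFn]
      rfl
  have hprod2 : (L.map g).prod = z ^ (N - m) *
      (R.map fun w => g (((starRingEnd ℂ) w)⁻¹)).prod := by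
    rw [hLdef, List.map_append, List.prod_append, List.map_replicate, List.prod_replicate]
    congr 1
    · congr 1
      rw [hgdef]
      simp
    · rw [List.map_map]
      have hgen : ∀ (f : ℂ → ℂ), ((R.toList.map f).prod) = (R.map f).prod := by
        intro f
        rw [← Multiset.prod_coe, ← Multiset.map_coe, Multiset.coe_toList]
      exact hgen _
  -- the per-root identity
  have hper : (R.map fun w => 1 - (starRingEnd ℂ) w * z).prod =
      (R.map fun w => (starRingEnd ℂ) w / w).prod *
        (R.map fun w => g (((starRingEnd ℂ) w)⁻¹)).prod *
        (R.map fun w => z - w).prod := by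
    rw [← Multiset.prod_map_mul, ← Multiset.prod_map_mul]
    apply congrArg
    apply Multiset.map_congr rfl
    intro w hw
    have hw1 : 1 < ‖w‖ := hroots_gt w hw
    have hw0 : w ≠ 0 := by intro h; rw [h, norm_zero] at hw1; norm_num at hw1
    have hcw0 : (starRingEnd ℂ) w ≠ 0 := by
      intro h
      apply hw0
      simpa using congrArg (starRingEnd ℂ) h
    have hzw : z ≠ w := by
      intro h; rw [h] at hz1; linarith
    have hinvz : ‖w⁻¹ * z‖ < 1 := by
      rw [norm_mul, norm_inv]
      have h1 : ‖w‖⁻¹ < 1 := by rw [inv_lt_one_iff₀]; right; exact hw1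
      calc ‖w‖⁻¹ * ‖z‖ ≤ ‖w‖⁻¹ * 1 := by
            apply mul_le_mul_of_nonneg_left (le_of_lt hz1) (by positivity)
        _ < 1 := by rwa [mul_one]
    have hden : 1 - (starRingEnd ℂ) (((starRingEnd ℂ) w)⁻¹) * z ≠ 0 := by
      rw [map_inv₀, Complex.conj_conj]
      intro h
      have hwz : w⁻¹ * z = 1 := by linear_combination -h
      rw [hwz, norm_one] at hinvz; norm_num at hinvz
    have hd : (1 : ℂ) - w⁻¹ * z ≠ 0 := by
      rw [map_inv₀, Complex.conj_conj] at hden; exact hden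
    have hwz0 : w - z ≠ 0 := sub_ne_zero.mpr (fun h => hzw h.symm)
    rw [hgdef]
    simp only [map_inv₀, Complex.conj_conj]
    have e1 : z - ((starRingEnd ℂ) w)⁻¹ = ((starRingEnd ℂ) w)⁻¹ * ((starRingEnd ℂ) w * z - 1) := by
      rw [mul_sub, ← mul_assoc, inv_mul_cancel₀ hcw0, one_mul, mul_one]
    have e2 : 1 - w⁻¹ * z = w⁻¹ * (w - z) := by
      rw [mul_sub, inv_mul_cancel₀ hw0]
    rw [e1, e2]
    have comb : ∀ (A B C D E : ℂ), A / B * (C / D) * E = A * C * E / (B * D) := by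
      intros; ring
    rw [comb, eq_div_iff (mul_ne_zero hw0 (mul_ne_zero (inv_ne_zero hw0) hwz0))]
    rw [show w * (w⁻¹ * (w - z)) = (w * w⁻¹) * (w - z) from by ring, mul_inv_cancel₀ hw0,
      one_mul]
    rw [show (starRingEnd ℂ) w * (((starRingEnd ℂ) w)⁻¹ * ((starRingEnd ℂ) w * z - 1)) * (z - w)
        = ((starRingEnd ℂ) w * ((starRingEnd ℂ) w)⁻¹) * (((starRingEnd ℂ) w * z - 1) * (z - w))
        from by ring, mul_inv_cancel₀ hcw0, one_mul]
    ring
  -- put everything together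
  rw [hstar, hPeval z, hprod1, hprod2, hqeval z, hper, hlamdef]
  have key2 : ∀ (X1 X2 X3 X4 : ℂ), c * (starRingEnd ℂ) b * X1 * (X2 * X3 * X4) =
      (c * (starRingEnd ℂ) b / b * X2) * (X1 * X3) * (b * X4) := by
    intro X1 X2 X3 X4
    field_simp
  exact key2 _ _ _ _
end
end

section
/- Let φ = p̃/p be a bidegree (m,n) rational inner function on 𝔻² and suppose that for some τ ∈ 𝕋 and α ∈ 𝕋 the vertical line {ζ ∈ 𝕋² : ζ₁ = τ} is contained in C_α(φ). Then there exists a constant c₁ ≠ 0 such that ∂φ/∂z₁(τ, z₂) = c₁ for all z₂ ∈ 𝔻. -/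
open MeasureTheory Complex Filter Topology

noncomputable section

/-- The open unit bidisk `𝔻²` in `ℂ²`. -/
def bidisk : Set (ℂ × ℂ) := {z | ‖z.1‖ < 1 ∧ ‖z.2‖ < 1}

/-- The closed bidisk. -/
def closedBidisk : Set (ℂ × ℂ) := {z | ‖z.1‖ ≤ 1 ∧ ‖z.2‖ ≤ 1}

/-- The distinguished boundary `𝕋²` of the bidisk. -/
def torus2 : Set (ℂ × ℂ) := {z | ‖z.1‖ = 1 ∧ ‖z.2‖ = 1}

/-- Evaluation of a two-variable polynomial at a point of `ℂ²`. -/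
def ev (p : MvPolynomial (Fin 2) ℂ) (z : ℂ × ℂ) : ℂ :=
  MvPolynomial.eval ![z.1, z.2] p

/-- The rational function `φ = p̃/p`. -/
def rif (p pt : MvPolynomial (Fin 2) ℂ) (z : ℂ × ℂ) : ℂ := ev pt z / ev p z

/-- The partial derivative `∂φ/∂z₁` of `φ = p̃/p`, via the quotient rule. -/
def dphi1 (p pt : MvPolynomial (Fin 2) ℂ) (z : ℂ × ℂ) : ℂ :=
  (ev (MvPolynomial.pderiv 0 pt) z * ev p z - ev pt z * ev (MvPolynomial.pderiv 0 p) z) /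
    (ev p z) ^ 2

/-- The partial derivative `∂φ/∂z₂` of `φ = p̃/p`, via the quotient rule. -/
def dphi2 (p pt : MvPolynomial (Fin 2) ℂ) (z : ℂ × ℂ) : ℂ :=
  (ev (MvPolynomial.pderiv 1 pt) z * ev p z - ev pt z * ev (MvPolynomial.pderiv 1 p) z) /
    (ev p z) ^ 2

/-- `pt` is the reflection `p̃(z₁,z₂) = z₁^m z₂^n conj(p(1/conj z₁, 1/conj z₂))` of `p`
at bidegree `(m,n)`. -/
def IsReflection2 (m n : ℕ) (p pt : MvPolynomial (Fin 2) ℂ) : Prop :=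
  ∀ z : ℂ × ℂ, z.1 ≠ 0 → z.2 ≠ 0 →
    ev pt z = z.1 ^ m * z.2 ^ n *
      (starRingEnd ℂ) (ev p (((starRingEnd ℂ) z.1)⁻¹, ((starRingEnd ℂ) z.2)⁻¹))

/-- The data of a bidegree `(m,n)` rational inner function `φ = p̃/p` on the bidisk
(with `m, n ≥ 1`):  `p` has degree `m` in `z₁` and `n` in `z₂`, is zero-free on `𝔻²`,
and has no common factor with its reflection `p̃`. -/
structure IsRIF2 (m n : ℕ) (p pt : MvPolynomial (Fin 2) ℂ) : Prop where
  hm : 1 ≤ m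
  hn : 1 ≤ n
  deg1 : MvPolynomial.degreeOf 0 p = m
  deg2 : MvPolynomial.degreeOf 1 p = n
  stable : ∀ z ∈ bidisk, ev p z ≠ 0
  coprime : ∀ r : MvPolynomial (Fin 2) ℂ, r ∣ p → r ∣ pt → IsUnit r
  reflection : IsReflection2 m n p pt

/-- The unimodular level set `C_α(φ)`, the closure of the set of points of `𝕋²` where
the radial limit of `φ` equals `α`. -/
def levelSet2 (p pt : MvPolynomial (Fin 2) ℂ) (α : ℂ) : Set (ℂ × ℂ) :=
  closure {ζ | ζ ∈ torus2 ∧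
    Tendsto (fun r : ℝ => rif p pt ((r : ℂ) * ζ.1, (r : ℂ) * ζ.2))
      (𝓝[<] (1 : ℝ)) (𝓝 α)}

/-- `α` is an exceptional value for `φ = p̃/p`: some horizontal or vertical line of `𝕋²`
is contained in `C_α(φ)`. -/
def IsExceptional (p pt : MvPolynomial (Fin 2) ℂ) (α : ℂ) : Prop :=
  ∃ τ : ℂ, ‖τ‖ = 1 ∧
    ({ζ : ℂ × ℂ | ζ.1 = τ ∧ ‖ζ.2‖ = 1} ⊆ levelSet2 p pt α ∨
     {ζ : ℂ × ℂ | ‖ζ.1‖ = 1 ∧ ζ.2 = τ} ⊆ levelSet2 p pt α)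

/-- `α` is a generic value for `φ = p̃/p`. -/
def IsGenericValue (p pt : MvPolynomial (Fin 2) ℂ) (α : ℂ) : Prop :=
  ¬ IsExceptional p pt α

/-- Normalized Lebesgue (arclength) measure on the unit circle, as a measure on `ℂ`. -/
def mCircle : Measure ℂ :=
  (ENNReal.ofReal (2 * Real.pi))⁻¹ •
    Measure.map (fun θ : ℝ => Complex.exp ((θ : ℂ) * Complex.I))
      (MeasureTheory.volume.restrict (Set.Ico 0 (2 * Real.pi)))

/-- The two-variable product Poisson kernel. -/
def poisson2 (z ζ : ℂ × ℂ) : ℝ :=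
  ((1 - ‖z.1‖ ^ 2) / ‖ζ.1 - z.1‖ ^ 2) * ((1 - ‖z.2‖ ^ 2) / ‖ζ.2 - z.2‖ ^ 2)

/-- `σ` is the Clark measure of `φ = p̃/p` at parameter `α`: a positive Borel measure
on `𝕋²` whose Poisson integral is `(1-|φ(z)|²)/|α-φ(z)|²`. -/
def IsClarkMeasure2 (p pt : MvPolynomial (Fin 2) ℂ) (α : ℂ) (σ : Measure (ℂ × ℂ)) : Prop :=
  σ torus2ᶜ = 0 ∧
  ∀ z ∈ bidisk,
    ∫⁻ ζ, ENNReal.ofReal (poisson2 z ζ) ∂σ =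
      ENNReal.ofReal ((1 - ‖rif p pt z‖ ^ 2) / ‖α - rif p pt z‖ ^ 2)

/-- `g₁, …, g_n : 𝕋 → 𝕋` are functions on the circle, analytic except possibly at one
base point `τ₀ ∈ 𝕋`. -/
def IsGraphFamily (n : ℕ) (g : Fin n → ℂ → ℂ) : Prop :=
  (∀ j, ∀ ζ : ℂ, ‖ζ‖ = 1 → ‖g j ζ‖ = 1) ∧
  ∃ τ₀ : ℂ, ‖τ₀‖ = 1 ∧ ∀ j, ∀ θ : ℝ,
    Complex.exp ((θ : ℂ) * Complex.I) ≠ τ₀ →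
      AnalyticAt ℝ (fun t : ℝ => g j (Complex.exp ((t : ℂ) * Complex.I))) θ

/-- The union of the graphs `{(ζ, g_j(ζ)) : ζ ∈ 𝕋}`. -/
def graphUnion (n : ℕ) (g : Fin n → ℂ → ℂ) : Set (ℂ × ℂ) :=
  ⋃ j, {w : ℂ × ℂ | ‖w.1‖ = 1 ∧ w.2 = g j w.1}

/-- The vertical line `{ζ ∈ 𝕋² : ζ₁ = τ}`. -/
def vLine (τ : ℂ) : Set (ℂ × ℂ) := {w : ℂ × ℂ | w.1 = τ ∧ ‖w.2‖ = 1}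


namespace LinePDAux

lemma ev_eq_aeval (P : MvPolynomial (Fin 2) ℂ) (x y : ℂ) :
    ev P (x, y) = MvPolynomial.aeval ![x, y] P := by
  rw [ev, ← MvPolynomial.coe_aeval_eq_eval]; rfl

noncomputable def sl1 (P : MvPolynomial (Fin 2) ℂ) (w : ℂ) : Polynomial ℂ :=
  MvPolynomial.aeval ![Polynomial.X, Polynomial.C w] P

noncomputable def sl2 (P : MvPolynomial (Fin 2) ℂ) (w : ℂ) : Polynomial ℂ :=
  MvPolynomial.aeval ![Polynomial.C w, Polynomial.X] P

lemma sl1_eval (P : MvPolynomial (Fin 2) ℂ) (w z : ℂ) :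
    (sl1 P w).eval z = ev P (z, w) := by
  have h := AlgHom.congr_fun
    (MvPolynomial.comp_aeval (R := ℂ) (f := ![Polynomial.X, Polynomial.C w])
      (φ := Polynomial.aeval z)) P
  rw [ev_eq_aeval]
  have h2 : (fun i => Polynomial.eval z (![Polynomial.X, Polynomial.C w] i)) = ![z, w] := by
    funext i; fin_cases i <;> simp
  rw [sl1, ← Polynomial.coe_aeval_eq_eval]
  simpa [h2] using h

lemma sl2_eval (P : MvPolynomial (Fin 2) ℂ) (w z : ℂ) :
    (sl2 P w).eval z = ev P (w, z) := by
  have h := AlgHom.congr_fun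
    (MvPolynomial.comp_aeval (R := ℂ) (f := ![Polynomial.C w, Polynomial.X])
      (φ := Polynomial.aeval z)) P
  rw [ev_eq_aeval]
  have h2 : (fun i => Polynomial.eval z (![Polynomial.C w, Polynomial.X] i)) = ![w, z] := by
    funext i; fin_cases i <;> simp
  rw [sl2, ← Polynomial.coe_aeval_eq_eval]
  simpa [h2] using h

lemma infinite_ne_zero : {z : ℂ | z ≠ 0}.Infinite := by
  have h : ({0}ᶜ : Set ℂ).Infinite := Set.Finite.infinite_compl (Set.finite_singleton 0)
  have he : ({0}ᶜ : Set ℂ) = {z : ℂ | z ≠ 0} := by ext z; simp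
  rwa [he] at h

lemma infinite_ball : (Metric.ball (0:ℂ) 1).Infinite := by
  refine Set.infinite_of_injective_forall_mem
    (f := fun k : ℕ => (((1:ℝ)/(k+2) : ℝ) : ℂ)) ?_ ?_
  · intro a b h
    simp only [Complex.ofReal_inj] at h
    have ha : (a:ℝ)+2 ≠ 0 := by positivity
    have hb : (b:ℝ)+2 ≠ 0 := by positivity
    field_simp at h
    exact_mod_cast (by linarith : (a:ℝ) = b)
  · intro k
    simp only [Metric.mem_ball, dist_zero_right, Complex.norm_real, Real.norm_eq_abs]
    rw [abs_of_pos (by positivity), div_lt_one (by positivity)]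
    linarith [Nat.cast_nonneg (α := ℝ) k]

lemma infinite_circle : {z : ℂ | ‖z‖ = 1}.Infinite := by
  refine Set.infinite_of_injective_forall_mem
    (f := fun k : ℕ => Complex.exp ((((1:ℝ)/(k+1) : ℝ) : ℂ) * Complex.I)) ?_ ?_
  · intro a b h
    have him : Real.sin ((1:ℝ)/(a+1)) = Real.sin ((1:ℝ)/(b+1)) := by
      have h2 := congrArg Complex.im h
      simp only [] at h2
      rwa [Complex.exp_ofReal_mul_I_im, Complex.exp_ofReal_mul_I_im] at h2
    have hπ : (1:ℝ) ≤ Real.pi / 2 := by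
      have := Real.pi_gt_three; linarith
    have hmem : ∀ k : ℕ, (1:ℝ)/(k+1) ∈ Set.Icc (-(Real.pi/2)) (Real.pi/2) := by
      intro k
      constructor
      · have : (0:ℝ) < 1/(k+1) := by positivity
        have h2 : (0:ℝ) ≤ Real.pi / 2 := by positivity
        linarith
      · have : (1:ℝ)/(k+1) ≤ 1 := by
          rw [div_le_one (by positivity)]
          linarith [Nat.cast_nonneg (α := ℝ) k]
        linarith
    have h3 := Real.injOn_sin (hmem a) (hmem b) him
    have ha : (a:ℝ)+1 ≠ 0 := by positivity
    have hb : (b:ℝ)+1 ≠ 0 := by positivity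
    field_simp at h3
    exact_mod_cast (by linarith : (a:ℝ) = b)
  · intro k
    have : ‖Complex.exp ((((1:ℝ)/(k+1) : ℝ) : ℂ) * Complex.I)‖ = 1 := by
      rw [Complex.norm_exp_ofReal_mul_I]
    exact this

lemma poly_eq_zero_on (F : Polynomial ℂ) (S : Set ℂ) (hS : S.Infinite)
    (h : ∀ z ∈ S, Polynomial.eval z F = 0) : F = 0 := by
  apply Polynomial.eq_zero_of_infinite_isRoot
  exact hS.mono (fun z hz => h z hz)

lemma continuous_ev (P : MvPolynomial (Fin 2) ℂ) : Continuous (ev P) := by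
  show Continuous fun z : ℂ × ℂ => MvPolynomial.eval ![z.1, z.2] P
  induction P using MvPolynomial.induction_on with
  | C a => simpa using continuous_const
  | add p q hp hq => simp only [map_add]; exact hp.add hq
  | mul_X p i hp =>
    simp only [map_mul, MvPolynomial.eval_X]
    apply hp.mul
    fin_cases i
    · simpa using continuous_fst
    · simpa using continuous_snd


lemma natDegree_sl2_le (P : MvPolynomial (Fin 2) ℂ) (w : ℂ) :
    (sl2 P w).natDegree ≤ MvPolynomial.degreeOf 1 P := by
  conv_lhs => rw [sl2, ← P.support_sum_monomial_coeff]
  rw [map_sum]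
  apply Polynomial.natDegree_sum_le_of_forall_le
  intro v hv
  rw [MvPolynomial.aeval_monomial]
  refine le_trans (Polynomial.natDegree_mul_le) ?_
  have h1 : (algebraMap ℂ (Polynomial ℂ) (MvPolynomial.coeff v P)).natDegree = 0 := by
    rw [Polynomial.algebraMap_eq]; exact Polynomial.natDegree_C _
  rw [h1, zero_add]
  have h2 : (v.prod fun i k => (![Polynomial.C w, Polynomial.X] i) ^ k).natDegree ≤ v 1 := by
    rw [Finsupp.prod]
    refine le_trans (Polynomial.natDegree_prod_le _ _) ?_
    have h3 : ∀ i ∈ v.support,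
        ((![Polynomial.C w, Polynomial.X] i) ^ (v i)).natDegree
          ≤ (if i = 1 then v 1 else 0) := by
      intro i _
      fin_cases i
      · simp [Polynomial.natDegree_pow]
      · simp [Polynomial.natDegree_pow]
    refine le_trans (Finset.sum_le_sum h3) ?_
    refine le_trans (Finset.sum_le_sum_of_subset_of_nonneg (Finset.subset_univ _) ?_) ?_
    · intro i _ _; positivity
    · rw [Fin.sum_univ_two]; simp
  exact le_trans h2 (MvPolynomial.monomial_le_degreeOf 1 hv)

@[simp] lemma ev_mul (f g : MvPolynomial (Fin 2) ℂ) (z : ℂ × ℂ) :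
    ev (f * g) z = ev f z * ev g z := by simp [ev]
@[simp] lemma ev_add (f g : MvPolynomial (Fin 2) ℂ) (z : ℂ × ℂ) :
    ev (f + g) z = ev f z + ev g z := by simp [ev]
@[simp] lemma ev_sub (f g : MvPolynomial (Fin 2) ℂ) (z : ℂ × ℂ) :
    ev (f - g) z = ev f z - ev g z := by simp [ev]
@[simp] lemma ev_C (a : ℂ) (z : ℂ × ℂ) : ev (MvPolynomial.C a) z = a := by simp [ev]
@[simp] lemma ev_one (z : ℂ × ℂ) : ev 1 z = 1 := by simp [ev]
@[simp] lemma ev_X0 (z : ℂ × ℂ) : ev (MvPolynomial.X 0) z = z.1 := by simp [ev]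
@[simp] lemma ev_X1 (z : ℂ × ℂ) : ev (MvPolynomial.X 1) z = z.2 := by simp [ev]

noncomputable def subt (τ : ℂ) : MvPolynomial (Fin 2) ℂ →ₐ[ℂ] MvPolynomial (Fin 2) ℂ :=
  MvPolynomial.aeval ![MvPolynomial.C τ, MvPolynomial.X 1]

lemma ev_subt (τ : ℂ) (f : MvPolynomial (Fin 2) ℂ) (x y : ℂ) :
    ev (subt τ f) (x, y) = ev f (τ, y) := by
  have h := AlgHom.congr_fun (MvPolynomial.comp_aeval (R := ℂ)
    (f := ![MvPolynomial.C τ, MvPolynomial.X 1]) (φ := MvPolynomial.aeval ![x, y])) f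
  have h2 : (fun i => MvPolynomial.aeval ![x, y] (![MvPolynomial.C τ, MvPolynomial.X 1] i))
      = ![τ, y] := by
    funext i; fin_cases i <;> simp
  rw [ev_eq_aeval, ev_eq_aeval, subt]
  rw [h2] at h
  simpa using h

lemma dvd_sub_subt (τ : ℂ) (f : MvPolynomial (Fin 2) ℂ) :
    (MvPolynomial.X 0 - MvPolynomial.C τ) ∣ (f - subt τ f) := by
  induction f using MvPolynomial.induction_on with
  | C a => simp [subt]
  | add p q hp hq =>
    have h : p + q - subt τ (p + q) = (p - subt τ p) + (q - subt τ q) := by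
      rw [map_add]; ring
    rw [h]; exact dvd_add hp hq
  | mul_X p i hp =>
    have h : p * MvPolynomial.X i - subt τ (p * MvPolynomial.X i)
        = (p - subt τ p) * MvPolynomial.X i
          + subt τ p * (MvPolynomial.X i - subt τ (MvPolynomial.X i)) := by
      rw [map_mul]; ring
    rw [h]
    refine dvd_add (hp.mul_right _) (Dvd.dvd.mul_left ?_ _)
    have h01 : i = 0 ∨ i = 1 := by
      fin_cases i
      · exact Or.inl rfl
      · exact Or.inr rfl
    rcases h01 with h0 | h1
    · subst h0
      have hs : subt τ (MvPolynomial.X (0 : Fin 2)) = MvPolynomial.C τ := by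
        simp [subt]
      rw [hs]
    · subst h1
      have hs : subt τ (MvPolynomial.X (1 : Fin 2)) = MvPolynomial.X 1 := by
        simp [subt]
      rw [hs, sub_self]
      exact dvd_zero _

lemma eq_zero_of_ev (f : MvPolynomial (Fin 2) ℂ) (h : ∀ x y : ℂ, ev f (x, y) = 0) : f = 0 := by
  apply MvPolynomial.funext (q := 0)
  intro x
  have hx : ![x 0, x 1] = x := by funext i; fin_cases i <;> simp
  have h2 := h (x 0) (x 1)
  rw [ev] at h2
  simp only [hx] at h2
  simpa using h2

lemma X_sub_C_dvd (τ : ℂ) (f : MvPolynomial (Fin 2) ℂ) (h : ∀ y : ℂ, ev f (τ, y) = 0) :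
    (MvPolynomial.X 0 - MvPolynomial.C τ) ∣ f := by
  have h0 : subt τ f = 0 := by
    apply eq_zero_of_ev
    intro x y
    rw [ev_subt]
    exact h y
  have := dvd_sub_subt τ f
  rwa [h0, sub_zero] at this

lemma not_unit_X_sub_C (τ : ℂ) : ¬ IsUnit (MvPolynomial.X (0 : Fin 2) - MvPolynomial.C τ) := by
  intro h
  obtain ⟨u, hu⟩ := h
  have hmul : (u : MvPolynomial (Fin 2) ℂ) * (u⁻¹ : Units (MvPolynomial (Fin 2) ℂ)) = 1 :=
    u.mul_inv
  have := congrArg (fun q => ev q (τ, 0)) hmul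
  simp only [ev_mul, ev_one] at this
  rw [hu] at this
  simp only [ev_sub, ev_X0, ev_C, sub_self, zero_mul] at this
  exact zero_ne_one this

lemma conj_inv_of_norm_one {ζ : ℂ} (hζ : ‖ζ‖ = 1) : ((starRingEnd ℂ) ζ)⁻¹ = ζ := by
  have h1 : (starRingEnd ℂ) ζ * ζ = 1 := by
    rw [mul_comm, Complex.mul_conj, Complex.normSq_eq_norm_sq, hζ]
    norm_num
  exact (eq_inv_of_mul_eq_one_right h1).symm

lemma sl2_p_ne_zero {m n : ℕ} {p pt : MvPolynomial (Fin 2) ℂ} (hRIF : IsRIF2 m n p pt)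
    {ζ : ℂ} (hζ : ‖ζ‖ = 1) : sl2 p ζ ≠ 0 := by
  intro h0
  have hζ0 : ζ ≠ 0 := by
    intro h; rw [h] at hζ; simp at hζ
  have hzero : ∀ y : ℂ, ev p (ζ, y) = 0 := by
    intro y; rw [← sl2_eval, h0]; simp
  have hptz : ∀ y : ℂ, y ≠ 0 → ev pt (ζ, y) = 0 := by
    intro y hy
    rw [hRIF.reflection (ζ, y) hζ0 hy]
    have : ev p (((starRingEnd ℂ) ζ)⁻¹, ((starRingEnd ℂ) y)⁻¹) = 0 := by
      rw [conj_inv_of_norm_one hζ]; exact hzero _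
    rw [this]
    simp
  have hpt0 : sl2 pt ζ = 0 := by
    apply poly_eq_zero_on _ _ infinite_ne_zero
    intro y hy
    rw [sl2_eval]
    exact hptz y hy
  have hptzero : ∀ y : ℂ, ev pt (ζ, y) = 0 := by
    intro y; rw [← sl2_eval, hpt0]; simp
  exact not_unit_X_sub_C ζ
    (hRIF.coprime _ (X_sub_C_dvd ζ p hzero) (X_sub_C_dvd ζ pt hptzero))

lemma ck_norm_lt (ζ : ℂ) (hζ : ‖ζ‖ = 1) (k : ℕ) :
    ‖(((1 - 1/(k+1) : ℝ)) : ℂ) * ζ‖ < 1 := by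
  rw [norm_mul, Complex.norm_real, Real.norm_eq_abs, hζ, mul_one]
  have h1 : (0:ℝ) < 1/(k+1) := by positivity
  have h2 : (1:ℝ)/(k+1) ≤ 1 := by
    rw [div_le_one (by positivity)]
    linarith [Nat.cast_nonneg (α := ℝ) k]
  rw [abs_lt]
  constructor <;> linarith

lemma tendsto_ck (ζ : ℂ) :
    Filter.Tendsto (fun k : ℕ => (((1 - 1/(k+1) : ℝ)) : ℂ) * ζ) Filter.atTop (nhds ζ) := by
  have h1 : Filter.Tendsto (fun k : ℕ => (1 - 1/(k+1) : ℝ)) Filter.atTop (nhds 1) := by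
    have := tendsto_one_div_add_atTop_nhds_zero_nat (𝕜 := ℝ)
    have h2 := this.const_sub (1:ℝ)
    simpa using h2
  have h2 : Filter.Tendsto (fun k : ℕ => (((1 - 1/(k+1) : ℝ)) : ℂ)) Filter.atTop (nhds 1) := by
    have := (Complex.continuous_ofReal.tendsto 1).comp h1
    simpa [Function.comp_def] using this
  simpa using h2.mul_const ζ

lemma slice_zero_free {m n : ℕ} {p pt : MvPolynomial (Fin 2) ℂ} (hRIF : IsRIF2 m n p pt)
    {ζ : ℂ} (hζ : ‖ζ‖ = 1) : ∀ a : ℂ, ‖a‖ < 1 → ev p (ζ, a) ≠ 0 := by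
  intro a ha hFa
  have hFne : sl2 p ζ ≠ 0 := sl2_p_ne_zero hRIF hζ
  have hδpos : (0:ℝ) < 1 - ‖a‖ := by linarith
  have hbad : (Set.Ioo (0:ℝ) (1 - ‖a‖)
      \ ((fun r : ℂ => ‖r - a‖) '' ((sl2 p ζ).roots.toFinset : Set ℂ))).Nonempty := by
    apply Set.Infinite.nonempty
    apply Set.Infinite.diff (Set.Ioo_infinite hδpos)
    exact ((sl2 p ζ).roots.toFinset.finite_toSet.image _)
  obtain ⟨ρ, hρmem, hρno⟩ := hbad
  obtain ⟨hρ0, hρ1⟩ := hρmem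
  have hnoroot : ∀ z ∈ Metric.sphere a ρ, Polynomial.eval z (sl2 p ζ) ≠ 0 := by
    intro z hz hzroot
    apply hρno
    refine ⟨z, ?_, ?_⟩
    · rw [Finset.mem_coe, Multiset.mem_toFinset]
      exact (Polynomial.mem_roots hFne).mpr hzroot
    · rw [Metric.mem_sphere, dist_eq_norm] at hz
      exact hz
  have hsub : Metric.closedBall a ρ ⊆ Metric.ball (0:ℂ) 1 := by
    intro z hz
    simp only [Metric.mem_closedBall, dist_eq_norm] at hz
    simp only [Metric.mem_ball, dist_zero_right]
    calc ‖z‖ = ‖a + (z - a)‖ := by ring_nf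
    _ ≤ ‖a‖ + ‖z - a‖ := norm_add_le _ _
    _ < 1 := by linarith
  have hsphcompact : IsCompact (Metric.sphere a ρ) := isCompact_sphere a ρ
  have hsphne : (Metric.sphere a ρ).Nonempty := NormedSpace.sphere_nonempty.mpr hρ0.le
  have hsphsub : Metric.sphere a ρ ⊆ Metric.closedBall a ρ := Metric.sphere_subset_closedBall
  -- for each k, find a near-minimum point on the sphere
  have hexists : ∀ k : ℕ, ∃ w ∈ Metric.sphere a ρ,
      ‖ev p ((((1 - 1/(k+1) : ℝ)) : ℂ) * ζ, w)‖ ≤ ‖ev p ((((1 - 1/(k+1) : ℝ)) : ℂ) * ζ, a)‖ := by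
    intro k
    set c : ℂ := (((1 - 1/(k+1) : ℝ)) : ℂ) * ζ with hc
    have hcn : ‖c‖ < 1 := ck_norm_lt ζ hζ k
    set G : Polynomial ℂ := sl2 p c with hG
    have hGev : ∀ z : ℂ, Polynomial.eval z G = ev p (c, z) := fun z => sl2_eval p c z
    have hGnz : ∀ z ∈ Metric.closedBall a ρ, Polynomial.eval z G ≠ 0 := by
      intro z hz
      rw [hGev]
      exact hRIF.stable (c, z) ⟨hcn, by simpa [Metric.mem_ball, dist_zero_right] using hsub hz⟩
    obtain ⟨w₀, hw₀mem, hw₀min⟩ := hsphcompact.exists_isMinOn hsphne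
      ((G.continuous.norm).continuousOn)
    refine ⟨w₀, hw₀mem, ?_⟩
    have hmm : ‖(Polynomial.eval a G)⁻¹‖ ≤ ‖Polynomial.eval w₀ G‖⁻¹ := by
      apply Complex.norm_le_of_forall_mem_frontier_norm_le
        (f := fun z => (Polynomial.eval z G)⁻¹) (U := Metric.ball a ρ)
        Metric.isBounded_ball
      · refine ⟨?_, ?_⟩
        · exact ((G.differentiable.differentiableOn).inv
            (fun z hz => hGnz z (Metric.ball_subset_closedBall hz)))
        · rw [closure_ball a hρ0.ne']
          exact (G.continuous.continuousOn).inv₀ hGnz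
      · intro z hz
        rw [frontier_ball a hρ0.ne'] at hz
        rw [norm_inv]
        rw [inv_le_inv₀ (norm_pos_iff.mpr (hGnz z (hsphsub hz)))
          (norm_pos_iff.mpr (hGnz w₀ (hsphsub hw₀mem)))]
        exact hw₀min hz
      · rw [closure_ball a hρ0.ne']
        exact Metric.mem_closedBall_self hρ0.le
    rw [norm_inv, inv_le_inv₀ (norm_pos_iff.mpr (hGnz a (Metric.mem_closedBall_self hρ0.le)))
      (norm_pos_iff.mpr (hGnz w₀ (hsphsub hw₀mem)))] at hmm
    rw [← hGev a, ← hGev w₀]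
    exact hmm
  choose w hw1 hw2 using hexists
  obtain ⟨winf, hwinfmem, φ, hφmono, hφtend⟩ := hsphcompact.tendsto_subseq hw1
  have htendc : Filter.Tendsto
      (fun j : ℕ => ((((1 - 1/(φ j + 1) : ℝ)) : ℂ) * ζ)) Filter.atTop (nhds ζ) :=
    (tendsto_ck ζ).comp hφmono.tendsto_atTop
  have hL : Filter.Tendsto
      (fun j : ℕ => ‖ev p ((((1 - 1/(φ j + 1) : ℝ)) : ℂ) * ζ, w (φ j))‖)
      Filter.atTop (nhds ‖ev p (ζ, winf)‖) := by
    have hpair : Filter.Tendsto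
        (fun j : ℕ => (((((1 - 1/(φ j + 1) : ℝ)) : ℂ) * ζ, w (φ j)) : ℂ × ℂ))
        Filter.atTop (nhds (ζ, winf)) := htendc.prodMk_nhds hφtend
    exact (((continuous_ev p).tendsto _).comp hpair).norm
  have hR : Filter.Tendsto
      (fun j : ℕ => ‖ev p ((((1 - 1/(φ j + 1) : ℝ)) : ℂ) * ζ, a)‖)
      Filter.atTop (nhds 0) := by
    have hpair : Filter.Tendsto
        (fun j : ℕ => (((((1 - 1/(φ j + 1) : ℝ)) : ℂ) * ζ, a) : ℂ × ℂ))
        Filter.atTop (nhds (ζ, a)) := htendc.prodMk_nhds tendsto_const_nhds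
    have := (((continuous_ev p).tendsto _).comp hpair).norm
    rwa [hFa, norm_zero] at this
  have hle : ‖ev p (ζ, winf)‖ ≤ 0 :=
    le_of_tendsto_of_tendsto' hL hR (fun j => hw2 (φ j))
  have : ev p (ζ, winf) = 0 := by
    have := le_antisymm hle (norm_nonneg _)
    exact norm_eq_zero.mp this
  exact hnoroot winf hwinfmem (by rw [sl2_eval]; exact this)

lemma key_ineq {r z : ℂ} (hr : 1 ≤ ‖r‖) (hz : ‖z‖ < 1) :
    ‖1 - (starRingEnd ℂ) r * z‖ ≤ ‖z - r‖ := by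
  have hr2 : 1 ≤ r.re^2 + r.im^2 := by
    have h1 : Complex.normSq r = ‖r‖^2 := by
      rw [Complex.normSq_eq_norm_sq]
    have h2 : (1:ℝ) ≤ ‖r‖^2 := by nlinarith [norm_nonneg r]
    rw [Complex.normSq_apply] at h1
    nlinarith [h1, h2]
  have hz2 : z.re^2 + z.im^2 ≤ 1 := by
    have h1 : Complex.normSq z = ‖z‖^2 := by
      rw [Complex.normSq_eq_norm_sq]
    have h2 : ‖z‖^2 ≤ 1 := by nlinarith [norm_nonneg z]
    rw [Complex.normSq_apply] at h1
    nlinarith [h1, h2]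
  have hsq : Complex.normSq (1 - (starRingEnd ℂ) r * z) ≤ Complex.normSq (z - r) := by
    simp only [Complex.normSq_apply, Complex.sub_re, Complex.sub_im, Complex.one_re,
      Complex.one_im, Complex.mul_re, Complex.mul_im, Complex.conj_re, Complex.conj_im]
    nlinarith [mul_nonneg (sub_nonneg.mpr hr2) (sub_nonneg.mpr hz2)]
  rw [Complex.norm_def, Complex.norm_def]
  exact Real.sqrt_le_sqrt hsq

lemma reflect_le (F : Polynomial ℂ) (hF : F ≠ 0) (n : ℕ) (hdeg : F.natDegree ≤ n)
    (hzf : ∀ a : ℂ, ‖a‖ < 1 → Polynomial.eval a F ≠ 0) {z : ℂ} (hz1 : ‖z‖ < 1) (hz0 : z ≠ 0) :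
    ‖z ^ n * (starRingEnd ℂ) (Polynomial.eval (((starRingEnd ℂ) z)⁻¹) F)‖
      ≤ ‖Polynomial.eval z F‖ := by
  have hsplits : F.Splits := IsAlgClosed.splits F
  have hcard : Multiset.card F.roots = F.natDegree := Polynomial.splits_iff_card_roots.mp hsplits
  have hfac := Polynomial.C_leadingCoeff_mul_prod_multiset_X_sub_C hcard
  have hev : ∀ w : ℂ, Polynomial.eval w F
      = F.leadingCoeff * (F.roots.map (fun a => w - a)).prod := by
    intro w
    conv_lhs => rw [← hfac]
    rw [Polynomial.eval_mul, Polynomial.eval_C, Polynomial.eval_multiset_prod,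
      Multiset.map_map]
    apply congrArg
    apply congrArg
    apply Multiset.map_congr rfl
    intro a _
    simp
  have hroots1 : ∀ a ∈ F.roots, 1 ≤ ‖a‖ := by
    intro a haR
    by_contra hlt
    push_neg at hlt
    exact hzf a hlt ((Polynomial.mem_roots hF).mp haR)
  set d := Multiset.card F.roots with hdd
  have hdn : d ≤ n := by rw [hcard]; exact hdeg
  have hlhs : z ^ n * (starRingEnd ℂ) (Polynomial.eval (((starRingEnd ℂ) z)⁻¹) F)
      = (starRingEnd ℂ) F.leadingCoeff * (z ^ (n - d)
        * (F.roots.map (fun a => 1 - (starRingEnd ℂ) a * z)).prod) := by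
    rw [hev, map_mul, map_multiset_prod (starRingEnd ℂ), Multiset.map_map]
    have hmm : (Multiset.map ((starRingEnd ℂ) ∘ fun a => ((starRingEnd ℂ) z)⁻¹ - a) F.roots)
        = Multiset.map (fun a => z⁻¹ - (starRingEnd ℂ) a) F.roots := by
      apply Multiset.map_congr rfl
      intro a _
      simp [Function.comp, map_sub, map_inv₀, Complex.conj_conj]
    rw [hmm]
    have hzd : z ^ d * (Multiset.map (fun a => z⁻¹ - (starRingEnd ℂ) a) F.roots).prod
        = (Multiset.map (fun a => 1 - (starRingEnd ℂ) a * z) F.roots).prod := by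
      have h1 : z ^ d = (Multiset.map (fun _ : ℂ => z) F.roots).prod := by
        rw [Multiset.map_const', Multiset.prod_replicate]
      rw [h1, ← Multiset.prod_map_mul]
      apply congrArg
      apply Multiset.map_congr rfl
      intro a _
      rw [mul_sub, mul_inv_cancel₀ hz0]
      ring
    have hzn : z ^ n = z ^ (n - d) * z ^ d := by rw [← pow_add]; congr 1; omega
    calc z ^ n * ((starRingEnd ℂ) F.leadingCoeff
          * (Multiset.map (fun a => z⁻¹ - (starRingEnd ℂ) a) F.roots).prod)
        = (starRingEnd ℂ) F.leadingCoeff * (z ^ (n - d)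
          * (z ^ d * (Multiset.map (fun a => z⁻¹ - (starRingEnd ℂ) a) F.roots).prod)) := by
          rw [hzn]; ring
      _ = (starRingEnd ℂ) F.leadingCoeff * (z ^ (n - d)
          * (Multiset.map (fun a => 1 - (starRingEnd ℂ) a * z) F.roots).prod) := by rw [hzd]
  rw [hlhs, hev z]
  rw [← coe_nnnorm, ← coe_nnnorm, NNReal.coe_le_coe]
  simp only [nnnorm_mul, nnnorm_pow, RCLike.nnnorm_conj]
  have hprodnorm : ∀ (f : ℂ → ℂ),
      ‖(Multiset.map f F.roots).prod‖₊ = (Multiset.map (fun a => ‖f a‖₊) F.roots).prod := by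
    intro f
    have h := map_multiset_prod (nnnormHom (α := ℂ)) (Multiset.map f F.roots)
    rw [Multiset.map_map] at h
    exact h
  rw [hprodnorm, hprodnorm]
  have hstep : (Multiset.map (fun a => ‖1 - (starRingEnd ℂ) a * z‖₊) F.roots).prod
      ≤ (Multiset.map (fun a => ‖z - a‖₊) F.roots).prod := by
    apply Multiset.prod_map_le_prod_map
    intro a ha
    rw [← NNReal.coe_le_coe, coe_nnnorm, coe_nnnorm]
    exact key_ineq (hroots1 a ha) hz1
  have hzpow : ‖z‖₊ ^ (n - d) ≤ 1 := by
    apply pow_le_one'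
    rw [← NNReal.coe_le_coe, coe_nnnorm]
    exact hz1.le
  calc ‖F.leadingCoeff‖₊ * (‖z‖₊ ^ (n - d)
        * (Multiset.map (fun a => ‖1 - (starRingEnd ℂ) a * z‖₊) F.roots).prod)
      ≤ ‖F.leadingCoeff‖₊ * (1 * (Multiset.map (fun a => ‖z - a‖₊) F.roots).prod) := by
        exact mul_le_mul_right (mul_le_mul' hzpow hstep) _
    _ = ‖F.leadingCoeff‖₊ * (Multiset.map (fun a => ‖z - a‖₊) F.roots).prod := by
        rw [one_mul]

lemma pt_le_p_on_circle {m n : ℕ} {p pt : MvPolynomial (Fin 2) ℂ} (hRIF : IsRIF2 m n p pt)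
    {ζ : ℂ} (hζ : ‖ζ‖ = 1) : ∀ y : ℂ, ‖y‖ < 1 → ‖ev pt (ζ, y)‖ ≤ ‖ev p (ζ, y)‖ := by
  have hζ0 : ζ ≠ 0 := by intro h; rw [h] at hζ; simp at hζ
  have main : ∀ y : ℂ, ‖y‖ < 1 → y ≠ 0 → ‖ev pt (ζ, y)‖ ≤ ‖ev p (ζ, y)‖ := by
    intro y hy hy0
    rw [hRIF.reflection (ζ, y) hζ0 hy0]
    simp only []
    rw [conj_inv_of_norm_one hζ]
    have hFev : ev p (ζ, ((starRingEnd ℂ) y)⁻¹)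
        = Polynomial.eval (((starRingEnd ℂ) y)⁻¹) (sl2 p ζ) := (sl2_eval p ζ _).symm
    rw [hFev]
    have hdegF : (sl2 p ζ).natDegree ≤ n := by
      have := natDegree_sl2_le p ζ
      rw [hRIF.deg2] at this
      exact this
    have hkey := reflect_le (sl2 p ζ) (sl2_p_ne_zero hRIF hζ) n hdegF
      (fun a ha => by rw [sl2_eval]; exact slice_zero_free hRIF hζ a ha) hy hy0
    rw [sl2_eval p ζ y] at hkey
    calc ‖ζ ^ m * y ^ n * (starRingEnd ℂ) (Polynomial.eval (((starRingEnd ℂ) y)⁻¹) (sl2 p ζ))‖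
        = ‖ζ‖ ^ m * ‖y ^ n * (starRingEnd ℂ) (Polynomial.eval (((starRingEnd ℂ) y)⁻¹) (sl2 p ζ))‖ := by
          rw [mul_assoc, norm_mul, norm_pow]
      _ = ‖y ^ n * (starRingEnd ℂ) (Polynomial.eval (((starRingEnd ℂ) y)⁻¹) (sl2 p ζ))‖ := by
          rw [hζ, one_pow, one_mul]
      _ ≤ ‖ev p (ζ, y)‖ := hkey
  intro y hy
  by_cases hy0 : y = 0
  · subst hy0
    have hseq : ∀ k : ℕ, ‖ev pt (ζ, (((1:ℝ)/(k+2) : ℝ) : ℂ))‖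
        ≤ ‖ev p (ζ, (((1:ℝ)/(k+2) : ℝ) : ℂ))‖ := by
      intro k
      apply main
      · rw [Complex.norm_real, Real.norm_eq_abs, abs_lt]
        constructor
        · have : (0:ℝ) < 1/(k+2) := by positivity
          linarith
        · rw [div_lt_one (by positivity)]
          linarith [Nat.cast_nonneg (α := ℝ) k]
      · intro h
        have : (1:ℝ)/(k+2) = 0 := by exact_mod_cast h
        have h2 : (0:ℝ) < 1/(k+2) := by positivity
        linarith
    have htend : Filter.Tendsto (fun k : ℕ => ((((1:ℝ)/(k+2) : ℝ)) : ℂ)) Filter.atTop (nhds 0) := by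
      have h1 : Filter.Tendsto (fun k : ℕ => (1:ℝ)/(k+2)) Filter.atTop (nhds 0) := by
        have h0 : Filter.Tendsto (fun k : ℕ => ((k:ℝ)+2)) Filter.atTop Filter.atTop := by
          apply Filter.tendsto_atTop_add_const_right
          exact tendsto_natCast_atTop_atTop
        have h2 : Filter.Tendsto (fun k : ℕ => ((k:ℝ)+2)⁻¹) Filter.atTop (nhds 0) :=
          h0.inv_tendsto_atTop
        simpa [one_div] using h2
      have := (Complex.continuous_ofReal.tendsto 0).comp h1
      simpa [Function.comp_def] using this
    have hpair : Filter.Tendsto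
        (fun k : ℕ => ((ζ, (((1:ℝ)/(k+2) : ℝ) : ℂ)) : ℂ × ℂ)) Filter.atTop (nhds (ζ, 0)) :=
      tendsto_const_nhds.prodMk_nhds htend
    exact le_of_tendsto_of_tendsto'
      ((((continuous_ev pt).tendsto _).comp hpair).norm)
      ((((continuous_ev p).tendsto _).comp hpair).norm)
      hseq
  · exact main y hy hy0

lemma diff_ev1 (P : MvPolynomial (Fin 2) ℂ) (y : ℂ) :
    Differentiable ℂ (fun w : ℂ => ev P (w, y)) := by
  have h : (fun w : ℂ => ev P (w, y)) = fun w => Polynomial.eval w (sl1 P y) := by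
    funext w; rw [sl1_eval]
  rw [h]
  exact (sl1 P y).differentiable

lemma phi_le_one {m n : ℕ} {p pt : MvPolynomial (Fin 2) ℂ} (hRIF : IsRIF2 m n p pt)
    {x y : ℂ} (hx : ‖x‖ < 1) (hy : ‖y‖ < 1) :
    ‖ev pt (x, y)‖ ≤ ‖ev p (x, y)‖ := by
  have hden : ∀ w : ℂ, ‖w‖ ≤ 1 → ev p (w, y) ≠ 0 := by
    intro w hw
    rcases lt_or_eq_of_le hw with h | h
    · exact hRIF.stable (w, y) ⟨h, hy⟩
    · exact slice_zero_free hRIF h y hy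
  have key : ‖ev pt (x, y) / ev p (x, y)‖ ≤ 1 := by
    apply Complex.norm_le_of_forall_mem_frontier_norm_le
      (f := fun w => ev pt (w, y) / ev p (w, y)) (U := Metric.ball (0:ℂ) 1)
      Metric.isBounded_ball
    · constructor
      · apply DifferentiableOn.div
          ((diff_ev1 pt y).differentiableOn) ((diff_ev1 p y).differentiableOn)
        intro w hw
        rw [Metric.mem_ball, dist_zero_right] at hw
        exact hden w hw.le
      · rw [closure_ball (0:ℂ) one_ne_zero]
        apply ContinuousOn.div
          ((diff_ev1 pt y).continuous.continuousOn) ((diff_ev1 p y).continuous.continuousOn)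
        intro w hw
        rw [Metric.mem_closedBall, dist_zero_right] at hw
        exact hden w hw
    · intro w hw
      rw [frontier_ball (0:ℂ) one_ne_zero] at hw
      have hw1 : ‖w‖ = 1 := by
        rw [Metric.mem_sphere, dist_zero_right] at hw
        exact hw
      rw [norm_div, div_le_one (norm_pos_iff.mpr (hden w hw1.le))]
      exact pt_le_p_on_circle hRIF hw1 y hy
    · rw [closure_ball (0:ℂ) one_ne_zero]
      rw [Metric.mem_closedBall, dist_zero_right]
      exact hx.le
  rw [norm_div, div_le_one (norm_pos_iff.mpr (hRIF.stable (x, y) ⟨hx, hy⟩))] at key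
  exact key

lemma slice_identity {m n : ℕ} {p pt : MvPolynomial (Fin 2) ℂ} (hRIF : IsRIF2 m n p pt)
    {α τ : ℂ} (hα : ‖α‖ = 1) (hτ : ‖τ‖ = 1)
    (hline : vLine τ ⊆ levelSet2 p pt α) :
    ∀ y : ℂ, ev pt (τ, y) = α * ev p (τ, y) := by
  set K : Set (ℂ × ℂ) := {ζ | ev p ζ = 0} ∪ {ζ | ev pt ζ - α * ev p ζ = 0} with hK
  have hKclosed : IsClosed K := by
    apply IsClosed.union
    · exact isClosed_eq (continuous_ev p) continuous_const
    · exact isClosed_eq ((continuous_ev pt).sub ((continuous_ev p).const_smul α)) continuous_const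
  have hSsub : {ζ : ℂ × ℂ | ζ ∈ torus2 ∧
      Filter.Tendsto (fun r : ℝ => rif p pt ((r : ℂ) * ζ.1, (r : ℂ) * ζ.2))
        (nhdsWithin 1 (Set.Iio 1)) (nhds α)} ⊆ K := by
    rintro ζ ⟨hζT, hζlim⟩
    by_cases hpz : ev p ζ = 0
    · exact Or.inl hpz
    · right
      have hr : Filter.Tendsto (fun r : ℝ => (r : ℂ)) (nhdsWithin (1:ℝ) (Set.Iio 1))
          (nhds 1) := by
        have h0 : Filter.Tendsto (fun r : ℝ => (r : ℂ)) (nhds (1:ℝ)) (nhds ((1:ℝ):ℂ)) :=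
          Complex.continuous_ofReal.tendsto 1
        have h1 := h0.mono_left (nhdsWithin_le_nhds (s := Set.Iio (1:ℝ)))
        simpa using h1
      have hmap : Filter.Tendsto (fun r : ℝ => (((r : ℂ) * ζ.1, (r : ℂ) * ζ.2) : ℂ × ℂ))
          (nhdsWithin (1:ℝ) (Set.Iio 1)) (nhds (ζ.1, ζ.2)) := by
        have h1 := hr.mul_const ζ.1
        have h2 := hr.mul_const ζ.2
        rw [one_mul] at h1 h2
        exact h1.prodMk_nhds h2
      have hnum : Filter.Tendsto (fun r : ℝ => ev pt ((r : ℂ) * ζ.1, (r : ℂ) * ζ.2))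
          (nhdsWithin (1:ℝ) (Set.Iio 1)) (nhds (ev pt ζ)) :=
        ((continuous_ev pt).tendsto (ζ.1, ζ.2)).comp hmap
      have hdenom : Filter.Tendsto (fun r : ℝ => ev p ((r : ℂ) * ζ.1, (r : ℂ) * ζ.2))
          (nhdsWithin (1:ℝ) (Set.Iio 1)) (nhds (ev p ζ)) :=
        ((continuous_ev p).tendsto (ζ.1, ζ.2)).comp hmap
      have hcont : Filter.Tendsto (fun r : ℝ => rif p pt ((r : ℂ) * ζ.1, (r : ℂ) * ζ.2))
          (nhdsWithin (1:ℝ) (Set.Iio 1)) (nhds (ev pt ζ / ev p ζ)) := hnum.div hdenom hpz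
      have huniq : α = ev pt ζ / ev p ζ := tendsto_nhds_unique hζlim hcont
      have : ev pt ζ = α * ev p ζ := by
        rw [huniq]; field_simp
      simp only [Set.mem_setOf_eq, this]
      ring
  have hclos : vLine τ ⊆ K := fun w hw => closure_minimal hSsub hKclosed (hline hw)
  have hcirc : ∀ y : ℂ, ‖y‖ = 1 →
      ev p (τ, y) = 0 ∨ ev pt (τ, y) - α * ev p (τ, y) = 0 := by
    intro y hy
    exact hclos (⟨rfl, hy⟩ : (τ, y) ∈ vLine τ)
  have hFfin : {y : ℂ | Polynomial.eval y (sl2 p τ) = 0}.Finite :=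
    Polynomial.finite_setOf_isRoot (sl2_p_ne_zero hRIF hτ)
  have hGzero : sl2 pt τ - Polynomial.C α * sl2 p τ = 0 := by
    apply poly_eq_zero_on _ ({y : ℂ | ‖y‖ = 1} \ {y | Polynomial.eval y (sl2 p τ) = 0})
      (infinite_circle.diff hFfin)
    rintro y ⟨hy1, hy2⟩
    rcases hcirc y hy1 with h | h
    · exact (hy2 (show Polynomial.eval y (sl2 p τ) = 0 by rw [sl2_eval]; exact h)).elim
    · simp only [Polynomial.eval_sub, Polynomial.eval_mul, Polynomial.eval_C, sl2_eval]
      exact h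
  intro y
  have h := congrArg (Polynomial.eval y) hGzero
  simp only [Polynomial.eval_sub, Polynomial.eval_mul, Polynomial.eval_C,
    Polynomial.eval_zero, sl2_eval] at h
  exact sub_eq_zero.mp h

lemma sl1_add (f g : MvPolynomial (Fin 2) ℂ) (w : ℂ) :
    sl1 (f + g) w = sl1 f w + sl1 g w := by simp [sl1]

lemma sl1_mul (f g : MvPolynomial (Fin 2) ℂ) (w : ℂ) :
    sl1 (f * g) w = sl1 f w * sl1 g w := by simp [sl1]

lemma derivative_sl1 (P : MvPolynomial (Fin 2) ℂ) (w : ℂ) :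
    (sl1 P w).derivative = sl1 (MvPolynomial.pderiv 0 P) w := by
  induction P using MvPolynomial.induction_on with
  | C a => simp [sl1]
  | add f g hf hg =>
    rw [sl1_add, Polynomial.derivative_add, hf, hg, map_add, sl1_add]
  | mul_X f i hf =>
    have h01 : i = 0 ∨ i = 1 := by
      fin_cases i
      · exact Or.inl rfl
      · exact Or.inr rfl
    have hX0 : sl1 (MvPolynomial.X 0) w = Polynomial.X := by simp [sl1]
    have hX1 : sl1 (MvPolynomial.X 1) w = Polynomial.C w := by simp [sl1]
    rcases h01 with rfl | rfl
    · simp only [MvPolynomial.pderiv_mul, MvPolynomial.pderiv_X_self, mul_one, sl1_add,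
        sl1_mul, hX0, Polynomial.derivative_mul, hf, Polynomial.derivative_X, mul_one]
    · simp only [MvPolynomial.pderiv_mul, MvPolynomial.pderiv_X_of_ne (by decide : (1 : Fin 2) ≠ 0),
        mul_zero, add_zero, sl1_mul, hX1, Polynomial.derivative_mul, hf,
        Polynomial.derivative_C, mul_zero, add_zero]

lemma hasDerivAt_ev1 (P : MvPolynomial (Fin 2) ℂ) (y x : ℂ) :
    HasDerivAt (fun w : ℂ => ev P (w, y)) (ev (MvPolynomial.pderiv 0 P) (x, y)) x := by
  have h : (fun w : ℂ => ev P (w, y)) = fun w => Polynomial.eval w (sl1 P y) := by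
    funext w; rw [sl1_eval]
  rw [h, ← sl1_eval (MvPolynomial.pderiv 0 P) y x, ← derivative_sl1]
  exact (sl1 P y).hasDerivAt x

lemma exists_q {m n : ℕ} {p pt : MvPolynomial (Fin 2) ℂ} (hRIF : IsRIF2 m n p pt)
    {α τ : ℂ} (hα : ‖α‖ = 1) (hτ : ‖τ‖ = 1)
    (hline : vLine τ ⊆ levelSet2 p pt α) :
    ∃ q : MvPolynomial (Fin 2) ℂ,
      pt = MvPolynomial.C α * p + (MvPolynomial.X 0 - MvPolynomial.C τ) * q := by
  have hdvd : (MvPolynomial.X 0 - MvPolynomial.C τ) ∣ (pt - MvPolynomial.C α * p) := by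
    apply X_sub_C_dvd
    intro y
    have h := slice_identity hRIF hα hτ hline y
    simp only [ev_sub, ev_mul, ev_C, h]
    ring
  obtain ⟨q, hq⟩ := hdvd
  exact ⟨q, by linear_combination hq⟩

lemma dphi1_eq {m n : ℕ} {p pt : MvPolynomial (Fin 2) ℂ} (hRIF : IsRIF2 m n p pt)
    {α τ : ℂ} (hτ : ‖τ‖ = 1) (q : MvPolynomial (Fin 2) ℂ)
    (hq : pt = MvPolynomial.C α * p + (MvPolynomial.X 0 - MvPolynomial.C τ) * q)
    {y : ℂ} (hy : ‖y‖ < 1) :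
    dphi1 p pt (τ, y) = ev q (τ, y) / ev p (τ, y) := by
  have hP : ev p (τ, y) ≠ 0 := slice_zero_free hRIF hτ y hy
  have hXτ : ev (MvPolynomial.X 0 - MvPolynomial.C τ) ((τ, y) : ℂ × ℂ) = 0 := by
    simp [ev_sub, ev_X0, ev_C]
  have hpt : ev pt (τ, y) = α * ev p (τ, y) := by
    rw [hq, ev_add, ev_mul, ev_mul, ev_C, hXτ, zero_mul, add_zero]
  have hdpt : ev (MvPolynomial.pderiv 0 pt) (τ, y)
      = α * ev (MvPolynomial.pderiv 0 p) (τ, y) + ev q (τ, y) := by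
    rw [hq, map_add, MvPolynomial.pderiv_C_mul, MvPolynomial.pderiv_mul]
    rw [ev_add, ev_mul, ev_C, ev_add, ev_mul, ev_mul, hXτ, zero_mul, add_zero]
    have hder : MvPolynomial.pderiv 0 (MvPolynomial.X 0 - MvPolynomial.C τ)
        = (1 : MvPolynomial (Fin 2) ℂ) := by
      rw [map_sub, MvPolynomial.pderiv_X_self, MvPolynomial.pderiv_C, sub_zero]
    rw [hder, ev_one, one_mul]
  rw [dphi1, hpt, hdpt]
  field_simp
  ring

lemma hasDerivAt_quot (p pt : MvPolynomial (Fin 2) ℂ) (τ y : ℂ)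
    (hP : ev p (τ, y) ≠ 0) :
    HasDerivAt (fun w : ℂ => ev pt (w, y) / ev p (w, y)) (dphi1 p pt (τ, y)) τ := by
  have h := (hasDerivAt_ev1 pt y τ).div (hasDerivAt_ev1 p y τ) hP
  exact h

lemma cone_re_nonneg (h g : ℂ → ℂ) (τ : ℂ) (hτ : ‖τ‖ = 1) (k : ℕ)
    (hgc : ContinuousAt g τ) (ε : ℝ) (hε : 0 < ε)
    (heq : ∀ z : ℂ, dist z τ < ε → h z = (z - τ) ^ k * g z)
    (hre : ∀ z ∈ Metric.ball (0:ℂ) 1, 0 ≤ (h z).re)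
    {θ : ℝ} (hθ1 : -(Real.pi/2) < θ) (hθ2 : θ < Real.pi/2) :
    0 ≤ (Complex.exp (((k * θ : ℝ)) * Complex.I) * ((-τ) ^ k * g τ)).re := by
  have hcos : 0 < Real.cos θ := Real.cos_pos_of_mem_Ioo ⟨hθ1, hθ2⟩
  set e : ℂ := Complex.exp (((θ : ℝ)) * Complex.I) with he
  have hee : ‖e‖ = 1 := by
    rw [he, Complex.norm_exp_ofReal_mul_I]
  set c : ℝ → ℂ := fun t => τ * (1 - (t : ℂ) * e) with hc
  set δ : ℝ := min (2 * Real.cos θ) ε with hδ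
  have hδpos : 0 < δ := lt_min (by linarith) hε
  -- c t in unit ball for 0 < t < δ
  have hmem1 : ∀ t : ℝ, 0 < t → t < δ → c t ∈ Metric.ball (0:ℂ) 1 := by
    intro t ht0 htδ
    have ht2 : t < 2 * Real.cos θ := lt_of_lt_of_le htδ (min_le_left _ _)
    rw [Metric.mem_ball, dist_zero_right, hc]
    simp only []
    rw [norm_mul, hτ, one_mul]
    have hsq : ‖1 - (t : ℂ) * e‖^2 < 1 := by
      have hns : Complex.normSq (1 - (t : ℂ) * e) = 1 - 2*t*Real.cos θ + t^2 := by
        have hre' : e.re = Real.cos θ := by rw [he, Complex.exp_ofReal_mul_I_re]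
        have him' : e.im = Real.sin θ := by rw [he, Complex.exp_ofReal_mul_I_im]
        simp only [Complex.normSq_apply, Complex.sub_re, Complex.sub_im, Complex.one_re,
          Complex.one_im, Complex.mul_re, Complex.mul_im, Complex.ofReal_re, Complex.ofReal_im,
          hre', him']
        have hpy := Real.sin_sq_add_cos_sq θ
        nlinarith [hpy]
      rw [← Complex.sq_norm] at hns
      rw [hns]
      nlinarith
    nlinarith [norm_nonneg (1 - (t : ℂ) * e)]
  have hmem2 : ∀ t : ℝ, 0 < t → t < δ → dist (c t) τ < ε := by
    intro t ht0 htδ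
    have : c t - τ = -(τ * ((t:ℂ) * e)) := by rw [hc]; ring
    rw [dist_eq_norm, this, norm_neg, norm_mul, hτ, one_mul, norm_mul, hee, mul_one,
      Complex.norm_real, Real.norm_eq_abs, abs_of_pos ht0]
    exact lt_of_lt_of_le htδ (min_le_right _ _)
  -- q t
  set w : ℂ := (-τ * e) ^ k with hw
  have hkey : ∀ t : ℝ, 0 < t → t < δ → 0 ≤ (w * g (c t)).re := by
    intro t ht0 htδ
    have h1 : h (c t) = (c t - τ) ^ k * g (c t) := heq _ (hmem2 t ht0 htδ)
    have h2 : c t - τ = (t : ℂ) * (-τ * e) := by rw [hc]; ring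
    have h3 : h (c t) = ((t^k : ℝ) : ℂ) * (w * g (c t)) := by
      rw [h1, h2, mul_pow, hw]
      push_cast
      ring
    have h4 : 0 ≤ (h (c t)).re := hre _ (hmem1 t ht0 htδ)
    rw [h3, Complex.re_ofReal_mul] at h4
    have h5 : 0 < t ^ k := pow_pos ht0 k
    nlinarith
  -- limit as t → 0+
  have hctend : Filter.Tendsto (fun t : ℝ => (w * g (c t)).re) (nhdsWithin 0 (Set.Ioi 0))
      (nhds ((w * g τ).re)) := by
    have hccont : ContinuousAt c 0 := by
      apply ContinuousAt.mul continuousAt_const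
      apply ContinuousAt.sub continuousAt_const
      exact (Complex.continuous_ofReal.continuousAt).mul continuousAt_const
    have hc0 : c 0 = τ := by rw [hc]; simp
    have hgc' : ContinuousAt (fun t : ℝ => g (c t)) 0 := by
      apply ContinuousAt.comp
      · rw [hc0] at *; exact hgc
      · exact hccont
    have : ContinuousAt (fun t : ℝ => (w * g (c t)).re) 0 :=
      (Complex.continuous_re.continuousAt).comp (continuousAt_const.mul hgc')
    have h6 := this.tendsto.mono_left (nhdsWithin_le_nhds (s := Set.Ioi (0:ℝ)))
    rw [hc0] at h6
    simpa [hc0] using h6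
  have hlim : 0 ≤ (w * g τ).re := by
    apply ge_of_tendsto hctend
    filter_upwards [Ioo_mem_nhdsGT_of_mem (Set.mem_Ico.mpr ⟨le_refl (0:ℝ), hδpos⟩)]
    intro t ht
    exact hkey t ht.1 ht.2
  -- rewrite w
  have hwre : w * g τ = Complex.exp (((k * θ : ℝ)) * Complex.I) * ((-τ) ^ k * g τ) := by
    rw [hw, mul_pow]
    have : e ^ k = Complex.exp (((k * θ : ℝ)) * Complex.I) := by
      rw [he, ← Complex.exp_nat_mul]
      push_cast
      ring_nf
    rw [this]
    ring
  rwa [hwre] at hlim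

lemma cone_forces (w : ℂ) (hw : w ≠ 0) (k : ℕ) (hk : 1 ≤ k)
    (hcone : ∀ θ : ℝ, -(Real.pi/2) < θ → θ < Real.pi/2 →
      0 ≤ (Complex.exp (((k * θ : ℝ)) * Complex.I) * w).re) :
    k = 1 ∧ w.im = 0 ∧ 0 < w.re := by
  set a := Complex.arg w with ha
  have hrange := Complex.arg_mem_Ioc w
  have hwabs := Complex.norm_mul_exp_arg_mul_I w
  have habs : 0 < ‖w‖ := norm_pos_iff.mpr hw
  have hπ := Real.pi_pos
  have hre : ∀ θ : ℝ, -(Real.pi/2) < θ → θ < Real.pi/2 → 0 ≤ Real.cos (k*θ + a) := by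
    intro θ h1 h2
    have h3 := hcone θ h1 h2
    rw [← hwabs] at h3
    have hcomb : Complex.exp (((k*θ : ℝ)) * Complex.I)
        * ((‖w‖ : ℂ) * Complex.exp ((a : ℝ) * Complex.I))
        = (‖w‖ : ℂ) * Complex.exp (((k*θ + a : ℝ)) * Complex.I) := by
      rw [mul_comm (Complex.exp _), mul_assoc, ← Complex.exp_add]
      push_cast
      ring_nf
    rw [hcomb, Complex.re_ofReal_mul, Complex.exp_ofReal_mul_I_re] at h3
    nlinarith
  have hknot : k < 2 := by
    by_contra h2k
    push_neg at h2k
    have hk2 : (2:ℝ) ≤ k := by exact_mod_cast h2k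
    set x : ℝ := if 0 ≤ a then 3*Real.pi/4 - a else -(3*Real.pi/4) - a with hx
    have hxabs : |x| < Real.pi := by
      rw [hx]
      split_ifs with h0a
      · rw [abs_lt]; constructor
        · have := hrange.2; nlinarith
        · nlinarith
      · push_neg at h0a
        rw [abs_lt]; constructor
        · have := hrange.1; nlinarith
        · nlinarith [hrange.1]
    have hcosneg : Real.cos (x + a) < 0 := by
      rw [hx]
      split_ifs with h0a
      · have hxa : (3*Real.pi/4 - a) + a = 3*Real.pi/4 := by ring
        rw [hxa]
        apply Real.cos_neg_of_pi_div_two_lt_of_lt <;> nlinarith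
      · have hxa : (-(3*Real.pi/4) - a) + a = -(3*Real.pi/4) := by ring
        rw [hxa, Real.cos_neg]
        apply Real.cos_neg_of_pi_div_two_lt_of_lt <;> nlinarith
    have hkpos : (0:ℝ) < k := by positivity
    set θ : ℝ := x / k with hθ
    have hθ1 : -(Real.pi/2) < θ := by
      rw [hθ, neg_lt, ← neg_div]
      rw [div_lt_iff₀ hkpos]
      have : |x| < Real.pi := hxabs
      rw [abs_lt] at this
      nlinarith [this.1]
    have hθ2 : θ < Real.pi/2 := by
      rw [hθ, div_lt_iff₀ hkpos]
      rw [abs_lt] at hxabs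
      nlinarith [hxabs.2]
    have h5 := hre θ hθ1 hθ2
    have hkx : (k : ℝ) * θ = x := by
      rw [hθ, mul_div_cancel₀]
      exact ne_of_gt hkpos
    rw [hkx] at h5
    linarith
  have hk1 : k = 1 := by omega
  subst hk1
  have ha0 : a = 0 := by
    by_contra hane
    rcases lt_or_gt_of_ne hane with haneg | hapos
    · -- a < 0, a > -π
      set θ : ℝ := -(Real.pi/2) - a/2 with hθ
      have hθ1 : -(Real.pi/2) < θ := by rw [hθ]; nlinarith
      have hθ2 : θ < Real.pi/2 := by rw [hθ]; nlinarith [hrange.1]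
      have h5 := hre θ hθ1 hθ2
      simp only [Nat.cast_one, one_mul] at h5
      have hxa : θ + a = a/2 - Real.pi/2 := by rw [hθ]; ring
      rw [hxa] at h5
      have : Real.cos (a/2 - Real.pi/2) < 0 := by
        rw [← Real.cos_neg]
        have hneg : -(a/2 - Real.pi/2) = Real.pi/2 - a/2 := by ring
        rw [hneg]
        apply Real.cos_neg_of_pi_div_two_lt_of_lt
        · nlinarith
        · nlinarith [hrange.1]
      linarith
    · -- a > 0, a ≤ π
      set θ : ℝ := Real.pi/2 - a/2 with hθ
      have hθ1 : -(Real.pi/2) < θ := by rw [hθ]; nlinarith [hrange.2]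
      have hθ2 : θ < Real.pi/2 := by rw [hθ]; nlinarith
      have h5 := hre θ hθ1 hθ2
      simp only [Nat.cast_one, one_mul] at h5
      have hxa : θ + a = Real.pi/2 + a/2 := by rw [hθ]; ring
      rw [hxa] at h5
      have : Real.cos (Real.pi/2 + a/2) < 0 := by
        apply Real.cos_neg_of_pi_div_two_lt_of_lt
        · nlinarith
        · nlinarith [hrange.2]
      linarith
  refine ⟨rfl, ?_, ?_⟩
  · have := Complex.arg_eq_zero_iff.mp (ha ▸ ha0)
    exact this.2
  · have h1 := Complex.arg_eq_zero_iff.mp (ha ▸ ha0)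
    rcases lt_or_eq_of_le h1.1 with h | h
    · exact h
    · exfalso
      apply hw
      apply Complex.ext
      · exact h.symm
      · exact h1.2

lemma jc (f : ℂ → ℂ) (U : Set ℂ) (hUopen : IsOpen U) (hUconn : IsPreconnected U)
    (hball : Metric.ball (0:ℂ) 1 ⊆ U) (τ : ℂ) (hτ : ‖τ‖ = 1) (hτU : τ ∈ U)
    (hf : AnalyticOnNhd ℂ f U) (hb : ∀ z ∈ Metric.ball (0:ℂ) 1, ‖f z‖ ≤ 1)
    (α : ℂ) (hα : ‖α‖ = 1) (hfτ : f τ = α) :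
    (∀ z ∈ Metric.ball (0:ℂ) 1, f z = α) ∨
    (((starRingEnd ℂ) α * τ * deriv f τ).im = 0 ∧
      0 < ((starRingEnd ℂ) α * τ * deriv f τ).re) := by
  have hτ0 : τ ≠ 0 := by intro h; rw [h] at hτ; simp at hτ
  have hαα : (starRingEnd ℂ) α * α = 1 := by
    rw [mul_comm, Complex.mul_conj, Complex.normSq_eq_norm_sq, hα]
    norm_num
  set h : ℂ → ℂ := fun z => 1 - (starRingEnd ℂ) α * f z with hh
  have hhan : AnalyticOnNhd ℂ h U := fun z hz =>
    (analyticAt_const.sub (analyticAt_const.mul (hf z hz)))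
  have hhτ : AnalyticAt ℂ h τ := hhan τ hτU
  have hre : ∀ z ∈ Metric.ball (0:ℂ) 1, 0 ≤ (h z).re := by
    intro z hz
    have h1 : ((starRingEnd ℂ) α * f z).re ≤ 1 := by
      calc ((starRingEnd ℂ) α * f z).re ≤ ‖(starRingEnd ℂ) α * f z‖ :=
            Complex.re_le_norm _
        _ = ‖(starRingEnd ℂ) α‖ * ‖f z‖ := by
            rw [norm_mul]
        _ ≤ 1 := by
            rw [RCLike.norm_conj, hα, one_mul]
            exact hb z hz
    simp only [hh, Complex.sub_re, Complex.one_re]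
    linarith
  have hh0 : h τ = 0 := by
    simp only [hh, hfτ, hαα, sub_self]
  rcases eq_or_ne (analyticOrderAt h τ) ⊤ with htop | hne
  · left
    have hev0 : ∀ᶠ z in nhds τ, h z = 0 := analyticOrderAt_eq_top.mp htop
    have heqz : Set.EqOn h 0 U :=
      hhan.eqOn_zero_of_preconnected_of_eventuallyEq_zero hUconn hτU hev0
    intro z hz
    have h2 : h z = 0 := heqz (hball hz)
    have h3 : (starRingEnd ℂ) α * f z = 1 := by
      simp only [hh] at h2
      linear_combination -h2
    calc f z = α * ((starRingEnd ℂ) α * f z) := by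
          rw [← mul_assoc, mul_comm α, hαα, one_mul]
      _ = α := by rw [h3, mul_one]
  · obtain ⟨k, hk⟩ := WithTop.ne_top_iff_exists.mp hne
    obtain ⟨g, hgan, hgτ, hgeq⟩ := (hhτ.analyticOrderAt_eq_natCast (n := k)).mp hk.symm
    have hk0 : 1 ≤ k := by
      rcases Nat.eq_zero_or_pos k with h0 | h1
      · exfalso
        subst h0
        have h2 := hgeq.self_of_nhds
        rw [hh0] at h2
        simp only [pow_zero, one_smul] at h2
        exact hgτ h2.symm
      · exact h1
    obtain ⟨ε, hε, heq⟩ := Metric.eventually_nhds_iff.mp hgeq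
    have heq' : ∀ z : ℂ, dist z τ < ε → h z = (z - τ) ^ k * g z := by
      intro z hz
      rw [heq hz, smul_eq_mul]
    have hcone : ∀ θ : ℝ, -(Real.pi/2) < θ → θ < Real.pi/2 →
        0 ≤ (Complex.exp (((k * θ : ℝ)) * Complex.I) * ((-τ) ^ k * g τ)).re := by
      intro θ h1 h2
      exact cone_re_nonneg h g τ hτ k (hgan.continuousAt) ε hε heq' hre h1 h2
    have hwne : (-τ) ^ k * g τ ≠ 0 :=
      mul_ne_zero (pow_ne_zero _ (neg_ne_zero.mpr hτ0)) hgτ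
    obtain ⟨hk1, him, hre2⟩ := cone_forces ((-τ) ^ k * g τ) hwne k hk0 hcone
    subst hk1
    right
    have hdh : deriv h τ = g τ := by
      have h1 : deriv h τ = deriv (fun z => (z - τ) ^ 1 * g z) τ :=
        Filter.EventuallyEq.deriv_eq (hgeq.mono fun z hz => by rw [hz, smul_eq_mul])
      rw [h1]
      have h2 : HasDerivAt (fun z : ℂ => (z - τ) ^ 1 * g z)
          (1 * g τ + (τ - τ) ^ 1 * deriv g τ) τ := by
        have hgd : HasDerivAt g (deriv g τ) τ := hgan.differentiableAt.hasDerivAt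
        have hid : HasDerivAt (fun z : ℂ => (z - τ) ^ 1) 1 τ := by
          simpa using ((hasDerivAt_id τ).sub_const τ)
        exact hid.mul hgd
      have h3 := h2.deriv
      rw [h3]
      simp
    have hdfd : DifferentiableAt ℂ f τ := (hf τ hτU).differentiableAt
    have hdh2 : deriv h τ = -((starRingEnd ℂ) α * deriv f τ) := by
      have h1 : HasDerivAt (fun z => (starRingEnd ℂ) α * f z)
          ((starRingEnd ℂ) α * deriv f τ) τ := hdfd.hasDerivAt.const_mul _
      have h2 := h1.const_sub 1
      have h3 : HasDerivAt h (-((starRingEnd ℂ) α * deriv f τ)) τ := h2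
      exact h3.deriv
    have hwval : (-τ) ^ 1 * g τ = (starRingEnd ℂ) α * τ * deriv f τ := by
      rw [pow_one, ← hdh, hdh2]
      ring
    rw [hwval] at him hre2
    exact ⟨him, hre2⟩

lemma const_of_real_range (u : ℂ → ℂ)
    (hu : AnalyticOnNhd ℂ u (Metric.ball (0:ℂ) 1))
    (him : ∀ z ∈ Metric.ball (0:ℂ) 1, (u z).im = 0) :
    ∀ z ∈ Metric.ball (0:ℂ) 1, u z = u 0 := by
  have hSconn : IsPreconnected (Metric.ball (0:ℂ) 1) := (convex_ball (0:ℂ) 1).isPreconnected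
  rcases hu.is_constant_or_isOpen hSconn with ⟨w, hw⟩ | hopen
  · intro z hz
    rw [hw z hz, hw 0 (by simp [Metric.mem_ball])]
  · exfalso
    have h1 : IsOpen (u '' Metric.ball (0:ℂ) 1) :=
      hopen _ (subset_refl _) Metric.isOpen_ball
    have h2 : u 0 ∈ u '' Metric.ball (0:ℂ) 1 :=
      ⟨0, by simp [Metric.mem_ball], rfl⟩
    obtain ⟨δ, hδ, hsub⟩ := Metric.isOpen_iff.mp h1 _ h2
    have h3 : u 0 + ((δ/2 : ℝ) : ℂ) * Complex.I ∈ Metric.ball (u 0) δ := by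
      rw [Metric.mem_ball, dist_eq_norm]
      have : ‖u 0 + ((δ/2 : ℝ) : ℂ) * Complex.I - u 0‖ = δ/2 := by
        have heq : u 0 + ((δ/2 : ℝ) : ℂ) * Complex.I - u 0 = ((δ/2 : ℝ) : ℂ) * Complex.I := by
          ring
        rw [heq, norm_mul, Complex.norm_real, Real.norm_eq_abs, Complex.norm_I, mul_one,
          abs_of_pos (by linarith)]
      rw [this]
      linarith
    obtain ⟨z, hzball, hzeq⟩ := hsub h3
    have h4 : (u z).im = 0 := him z hzball
    rw [hzeq] at h4
    simp only [Complex.add_im, Complex.mul_im, Complex.I_im, Complex.I_re,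
      Complex.ofReal_re, Complex.ofReal_im] at h4
    have h5 : (u 0).im = 0 := him 0 (by simp [Metric.mem_ball])
    rw [h5] at h4
    simp at h4
    linarith

lemma diff_ev2 (P : MvPolynomial (Fin 2) ℂ) (x : ℂ) :
    Differentiable ℂ (fun y : ℂ => ev P (x, y)) := by
  have h : (fun y : ℂ => ev P (x, y)) = fun y => Polynomial.eval y (sl2 P x) := by
    funext y; rw [sl2_eval]
  rw [h]
  exact (sl2 P x).differentiable

lemma globalize {α : ℂ} (p pt : MvPolynomial (Fin 2) ℂ)
    (h : ∀ x ∈ Metric.ball (0:ℂ) 1, ∀ y ∈ Metric.ball (0:ℂ) 1,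
      ev pt (x, y) = α * ev p (x, y)) :
    pt = MvPolynomial.C α * p := by
  set D : MvPolynomial (Fin 2) ℂ := pt - MvPolynomial.C α * p with hD
  have hDev : ∀ x y : ℂ, ev D (x, y) = ev pt (x, y) - α * ev p (x, y) := by
    intro x y
    rw [hD, ev_sub, ev_mul, ev_C]
  have h1 : ∀ y ∈ Metric.ball (0:ℂ) 1, ∀ x : ℂ, ev D (x, y) = 0 := by
    intro y hy
    have hsl : sl1 D y = 0 := by
      apply poly_eq_zero_on _ _ infinite_ball
      intro x hx
      rw [sl1_eval, hDev]
      rw [h x hx y hy]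
      ring
    intro x
    rw [← sl1_eval, hsl]
    simp
  have h2 : ∀ x y : ℂ, ev D (x, y) = 0 := by
    intro x
    have hsl : sl2 D x = 0 := by
      apply poly_eq_zero_on _ _ infinite_ball
      intro y hy
      rw [sl2_eval]
      exact h1 y hy x
    intro y
    rw [← sl2_eval, hsl]
    simp
  have h3 : D = 0 := eq_zero_of_ev D h2
  have h4 : pt - MvPolynomial.C α * p = 0 := h3
  linear_combination h4

lemma p_not_unit {m n : ℕ} {p pt : MvPolynomial (Fin 2) ℂ} (hRIF : IsRIF2 m n p pt) :
    ¬ IsUnit p := by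
  intro hu
  have h2 := hu.map (MvPolynomial.finSuccEquiv ℂ 1)
  have h3 := Polynomial.natDegree_eq_zero_of_isUnit h2
  rw [MvPolynomial.natDegree_finSuccEquiv, hRIF.deg1] at h3
  have := hRIF.hm
  omega

end LinePDAux

/-- Let `φ = p̃/p` be a bidegree `(m,n)` RIF on `𝔻²` and suppose the
vertical line `{ζ ∈ 𝕋² : ζ₁ = τ}` is contained in `C_α(φ)`. Then `∂φ/∂z₁(τ, ·)` is a
nonzero constant on `𝔻`. -/
theorem line_partial_derivative_constant
    (m n : ℕ) (p pt : MvPolynomial (Fin 2) ℂ) (hRIF : IsRIF2 m n p pt)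
    (α : ℂ) (hα : ‖α‖ = 1) (τ : ℂ) (hτ : ‖τ‖ = 1)
    (hline : vLine τ ⊆ levelSet2 p pt α) :
    ∃ c₁ : ℂ, c₁ ≠ 0 ∧ ∀ z₂ : ℂ, ‖z₂‖ < 1 → dphi1 p pt (τ, z₂) = c₁ := by
  classical
  have hτ0 : τ ≠ 0 := by intro h; rw [h] at hτ; simp at hτ
  have hα0 : α ≠ 0 := by intro h; rw [h] at hα; simp at hα
  obtain ⟨q, hq⟩ := LinePDAux.exists_q hRIF hα hτ hline
  have hPne : ∀ y : ℂ, ‖y‖ < 1 → ev p (τ, y) ≠ 0 :=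
    fun y hy => LinePDAux.slice_zero_free hRIF hτ y hy
  set B : ℂ → ℂ := fun y => ev q (τ, y) / ev p (τ, y) with hB
  have hdB : ∀ y : ℂ, ‖y‖ < 1 → dphi1 p pt (τ, y) = B y :=
    fun y hy => LinePDAux.dphi1_eq hRIF hτ q hq hy
  have hατ : (starRingEnd ℂ) α * τ ≠ 0 := by
    apply mul_ne_zero _ hτ0
    intro h
    apply hα0
    have := congrArg (starRingEnd ℂ) h
    rwa [Complex.conj_conj, map_zero] at this
  -- the dichotomy for each y
  have hdichot : ∀ y : ℂ, ‖y‖ < 1 →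
      (∀ x ∈ Metric.ball (0:ℂ) 1, ev pt (x, y) = α * ev p (x, y)) ∨
      (((starRingEnd ℂ) α * τ * B y).im = 0 ∧ 0 < ((starRingEnd ℂ) α * τ * B y).re) := by
    intro y hy
    have hPτ : ev p (τ, y) ≠ 0 := hPne y hy
    have hPc : ContinuousAt (fun w : ℂ => ev p (w, y)) τ :=
      (LinePDAux.diff_ev1 p y).continuous.continuousAt
    obtain ⟨ε, hε, hballne⟩ : ∃ ε > 0, ∀ w : ℂ, dist w τ < ε → ev p (w, y) ≠ 0 := by
      have hev := hPc.eventually_ne hPτ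
      rw [Metric.eventually_nhds_iff] at hev
      obtain ⟨ε, hε, hh⟩ := hev
      exact ⟨ε, hε, fun w hw => hh hw⟩
    set U : Set ℂ := Metric.ball (0:ℂ) 1 ∪ Metric.ball τ ε with hU
    have hUopen : IsOpen U := Metric.isOpen_ball.union Metric.isOpen_ball
    set msml : ℝ := min ε 1 with hm
    have hmpos : 0 < msml := lt_min hε one_pos
    have hmle1 : msml ≤ 1 := min_le_right _ _
    have hmleε : msml ≤ ε := min_le_left _ _
    set s : ℂ := ((1 - msml/2 : ℝ) : ℂ) * τ with hs
    have hs1 : s ∈ Metric.ball (0:ℂ) 1 := by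
      have habs : |1 - msml/2| = 1 - msml/2 := abs_of_nonneg (by linarith)
      rw [Metric.mem_ball, dist_zero_right, hs, norm_mul, Complex.norm_real, Real.norm_eq_abs,
        hτ, mul_one, habs]
      linarith
    have hs2 : s ∈ Metric.ball τ ε := by
      rw [Metric.mem_ball, dist_eq_norm, hs]
      have h5 : ((1 - msml/2 : ℝ) : ℂ) * τ - τ = ((-(msml/2) : ℝ) : ℂ) * τ := by
        push_cast; ring
      have habs : |msml/2| = msml/2 := abs_of_nonneg (by linarith)
      rw [h5, norm_mul, Complex.norm_real, Real.norm_eq_abs, hτ, mul_one, abs_neg, habs]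
      linarith
    have hUconn : IsPreconnected U :=
      IsPreconnected.union s hs1 hs2 (convex_ball _ _).isPreconnected
        (convex_ball _ _).isPreconnected
    have hden : ∀ w ∈ U, ev p (w, y) ≠ 0 := by
      intro w hw
      rcases hw with hw | hw
      · rw [Metric.mem_ball, dist_zero_right] at hw
        exact hRIF.stable (w, y) ⟨hw, hy⟩
      · rw [Metric.mem_ball] at hw
        exact hballne w hw
    set fy : ℂ → ℂ := fun w => ev pt (w, y) / ev p (w, y) with hfy
    have hfan : AnalyticOnNhd ℂ fy U := by
      apply DifferentiableOn.analyticOnNhd _ hUopen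
      exact ((LinePDAux.diff_ev1 pt y).differentiableOn).div
        ((LinePDAux.diff_ev1 p y).differentiableOn) hden
    have hfb : ∀ w ∈ Metric.ball (0:ℂ) 1, ‖fy w‖ ≤ 1 := by
      intro w hw
      rw [Metric.mem_ball, dist_zero_right] at hw
      rw [hfy]
      simp only []
      rw [norm_div, div_le_one (norm_pos_iff.mpr (hRIF.stable (w, y) ⟨hw, hy⟩))]
      exact LinePDAux.phi_le_one hRIF hw hy
    have hfτval : fy τ = α := by
      rw [hfy]
      simp only []
      rw [LinePDAux.slice_identity hRIF hα hτ hline y, mul_div_assoc, div_self hPτ, mul_one]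
    have hjc := LinePDAux.jc fy U hUopen hUconn Set.subset_union_left τ hτ
      (Set.mem_union_right _ (Metric.mem_ball_self hε)) hfan hfb α hα hfτval
    have hder : deriv fy τ = B y := by
      have hD := LinePDAux.hasDerivAt_quot p pt τ y hPτ
      rw [hfy, hD.deriv]
      exact (hdB y hy).symm.trans (hdB y hy) ▸ (hdB y hy) ▸ rfl
    rcases hjc with hconst | hray
    · left
      intro x hx
      have h1 := hconst x hx
      rw [hfy] at h1
      simp only [] at h1
      have hpx : ev p (x, y) ≠ 0 := hRIF.stable (x, y)
        ⟨by rwa [Metric.mem_ball, dist_zero_right] at hx, hy⟩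
      exact (div_eq_iff hpx).mp h1
    · right
      rwa [hder] at hray
  -- left case forces the derivative to vanish
  have hleftB : ∀ y : ℂ, ‖y‖ < 1 →
      (∀ x ∈ Metric.ball (0:ℂ) 1, ev pt (x, y) = α * ev p (x, y)) → ev q (τ, y) = 0 := by
    intro y hy hall
    have hq' : ∀ x : ℂ, ev pt (x, y) = α * ev p (x, y) + (x - τ) * ev q (x, y) := by
      intro x
      have h0 := congrArg (fun P : MvPolynomial (Fin 2) ℂ => ev P ((x, y) : ℂ × ℂ)) hq
      simpa [LinePDAux.ev_add, LinePDAux.ev_mul, LinePDAux.ev_C, LinePDAux.ev_sub,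
        LinePDAux.ev_X0] using h0
    have hzero : ∀ x ∈ Metric.ball (0:ℂ) 1, Polynomial.eval x (LinePDAux.sl1 q y) = 0 := by
      intro x hx
      have h1 := hall x hx
      have h2 := hq' x
      have h3 : (x - τ) * ev q (x, y) = 0 := by
        rw [h1] at h2
        linear_combination -h2
      have hxτ : x - τ ≠ 0 := by
        intro h0
        have hxeq : x = τ := sub_eq_zero.mp h0
        rw [Metric.mem_ball, dist_zero_right, hxeq, hτ] at hx
        exact lt_irrefl _ hx
      rw [LinePDAux.sl1_eval]
      rcases mul_eq_zero.mp h3 with h | h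
      · exact absurd h hxτ
      · exact h
    have hsl0 : LinePDAux.sl1 q y = 0 :=
      LinePDAux.poly_eq_zero_on _ _ LinePDAux.infinite_ball hzero
    rw [← LinePDAux.sl1_eval, hsl0]
    simp
  -- the function u is real-valued and analytic, hence constant
  set u : ℂ → ℂ := fun y => (starRingEnd ℂ) α * τ * B y with hu
  have huim : ∀ y ∈ Metric.ball (0:ℂ) 1, (u y).im = 0 := by
    intro y hy'
    have hy : ‖y‖ < 1 := by rwa [Metric.mem_ball, dist_zero_right] at hy'
    rcases hdichot y hy with hl | hr
    · have h0 : ev q (τ, y) = 0 := hleftB y hy hl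
      have hBy : B y = 0 := by rw [hB]; simp [h0]
      simp only [hu, hBy, mul_zero, Complex.zero_im]
    · exact hr.1
  have huan : AnalyticOnNhd ℂ u (Metric.ball (0:ℂ) 1) := by
    apply DifferentiableOn.analyticOnNhd _ Metric.isOpen_ball
    apply DifferentiableOn.const_mul
    apply DifferentiableOn.div ((LinePDAux.diff_ev2 q τ).differentiableOn)
      ((LinePDAux.diff_ev2 p τ).differentiableOn)
    intro y hy
    rw [Metric.mem_ball, dist_zero_right] at hy
    exact hPne y hy
  have hconst := LinePDAux.const_of_real_range u huan huim
  have h0ball : (0:ℂ) ∈ Metric.ball (0:ℂ) 1 := by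
    rw [Metric.mem_ball, dist_zero_right]; simp
  refine ⟨B 0, ?_, ?_⟩
  · -- nonvanishing
    intro hB0
    have hall2 : ∀ x ∈ Metric.ball (0:ℂ) 1, ∀ y ∈ Metric.ball (0:ℂ) 1,
        ev pt (x, y) = α * ev p (x, y) := by
      intro x hx y hy'
      have hy : ‖y‖ < 1 := by rwa [Metric.mem_ball, dist_zero_right] at hy'
      rcases hdichot y hy with hl | hr
      · exact hl x hx
      · exfalso
        have h1 := hconst y hy'
        simp only [hu] at h1
        rw [hB0, mul_zero] at h1
        have h2 := hr.2
        rw [h1] at h2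
        simp at h2
    have hglob := LinePDAux.globalize p pt hall2
    have hdvd : p ∣ pt := ⟨MvPolynomial.C α, by rw [hglob]; ring⟩
    exact LinePDAux.p_not_unit hRIF (hRIF.coprime p dvd_rfl hdvd)
  · intro y hy
    rw [hdB y hy]
    have h1 := hconst y (by rwa [Metric.mem_ball, dist_zero_right])
    simp only [hu] at h1
    exact mul_left_cancel₀ hατ h1
end
end
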